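/- arXiv:2509.23890 — 6 statements merged into one kernel-verified Lean document; each statement's English description precedes it below -/
import Mathlib

section
/- For every pair of indices j, k ≥ 1, the Takenaka–Malmqvist functions satisfy the orthonormality relation (1/π) ∫_{-∞}^{∞} Φ_j(x) · conj(Φ_k(x)) dx = 1 if j = k and = 0 if j ≠ k. -/
open MeasureTheory Complex

/-- χ_k := |1 + a_k²| / (1 + a_k²).  (0-based indexing: `a k` is the paper's a_{k+1}.) -/
noncomputable def chi (a : ℕ → ℂ) (k : ℕ) : ℂ :=
  ((‖1 + a k ^ 2‖ : ℝ) : ℂ) / (1 + a k ^ 2)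

/-- Blaschke product: `Blaschke a j` is the paper's B_{j+1}, i.e. the product over the
first `j` points (so `Blaschke a 0 = 1 = B₁`). -/
noncomputable def Blaschke (a : ℕ → ℂ) (j : ℕ) (z : ℂ) : ℂ :=
  ∏ k ∈ Finset.range j, chi a k * (z - a k) / (z - starRingEnd ℂ (a k))

/-- Takenaka–Malmqvist function: `Phi a j` is the paper's Φ_{j+1}. -/
noncomputable def Phi (a : ℕ → ℂ) (j : ℕ) (z : ℂ) : ℂ :=
  (Real.sqrt ((a j).im) : ℂ) * Blaschke a j z / (z - starRingEnd ℂ (a j))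


lemma cauchy_int (c y : ℝ) (hy : 0 < y) : ∫ x : ℝ, y / ((x - c)^2 + y^2) = Real.pi := by
  have h1 : ∀ x:ℝ, y/((x-c)^2+y^2) = y⁻¹ * (fun t => (1 + t^2)⁻¹) ((x - c)/y) := by
    intro x; have := hy.ne'; field_simp; ring
  simp_rw [h1]
  rw [integral_const_mul]
  rw [show (fun x:ℝ => (fun t => (1 + t^2)⁻¹) ((x - c)/y)) = (fun x:ℝ => (fun u:ℝ => (1 + (u/y)^2)⁻¹) (x - c)) from rfl]
  rw [integral_sub_right_eq_self (fun u:ℝ => (1 + (u/y)^2)⁻¹) c]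
  rw [Measure.integral_comp_div (fun t:ℝ => (1 + t^2)⁻¹) y]
  rw [integral_univ_inv_one_add_sq, abs_of_pos hy, smul_eq_mul]
  field_simp

open Filter Set Topology in
lemma integrable_of_decay (f : ℂ → ℂ) (hc : Continuous fun x : ℝ => f x)
    (C R₁ : ℝ) (hR₁ : 1 ≤ R₁)
    (hb : ∀ z : ℂ, z.im ≤ 0 → R₁ ≤ ‖z‖ → ‖f z‖ ≤ C / ‖z‖ ^ 2) :
    Integrable fun x : ℝ => f x := by
  obtain ⟨K, hK⟩ := (isCompact_Icc (a := -R₁) (b := R₁)).exists_bound_of_continuousOn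
    (hc.continuousOn)
  have hK0 : 0 ≤ K := le_trans (norm_nonneg _) (hK 0 (by constructor <;> nlinarith))
  set C' := max (2 * max C 0) (K * (1 + R₁ ^ 2)) with hC'
  have key : ∀ x : ℝ, ‖f x‖ ≤ C' * (1 + x ^ 2)⁻¹ := by
    intro x
    have hpos : (0:ℝ) < 1 + x ^ 2 := by positivity
    rw [mul_comm, inv_mul_eq_div, le_div_iff₀ hpos]
    rcases le_or_gt |x| R₁ with h | h
    · have h1 : ‖f x‖ ≤ K := hK x (abs_le.mp h)
      have h2 : K * (1 + R₁ ^ 2) ≤ C' := le_max_right _ _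
      nlinarith [_root_.sq_abs x, abs_nonneg x, norm_nonneg (f (x:ℂ)), pow_le_pow_left₀ (abs_nonneg x) h 2]
    · have him : ((x:ℂ)).im ≤ 0 := by simp
      have hn : ‖(x:ℂ)‖ = |x| := by simp
      have h1 : ‖f x‖ ≤ C / x ^ 2 := by
        have := hb x him (by rw [hn]; exact h.le)
        rwa [hn, _root_.sq_abs] at this
      have hx2 : 1 ≤ x ^ 2 := by nlinarith [_root_.sq_abs x, le_trans hR₁ h.le, abs_nonneg x]
      have hxx : (0:ℝ) < x ^ 2 := by linarith
      have h1' : ‖f x‖ * x ^ 2 ≤ C := (le_div_iff₀ hxx).mp h1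
      nlinarith [norm_nonneg (f (x:ℂ)), le_max_left (2 * max C 0) (K * (1 + R₁ ^ 2)), le_max_left C 0, le_max_right C 0]
  apply Integrable.mono' ((integrable_inv_one_add_sq).const_mul C')
  · exact hc.aestronglyMeasurable
  · exact Filter.Eventually.of_forall key

open Filter Set Topology in
lemma halfplane_integral_zero (f : ℂ → ℂ)
    (hd : ∀ z : ℂ, z.im ≤ 0 → DifferentiableAt ℂ f z)
    (C R₁ : ℝ) (hC : 0 ≤ C) (hR₁ : 1 ≤ R₁)
    (hb : ∀ z : ℂ, z.im ≤ 0 → R₁ ≤ ‖z‖ → ‖f z‖ ≤ C / ‖z‖ ^ 2) :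
    ∫ x : ℝ, f x = 0 := by
  have hc : Continuous fun x : ℝ => f x := by
    rw [continuous_iff_continuousAt]
    intro x
    exact (hd x (by simp)).continuousAt.comp Complex.continuous_ofReal.continuousAt
  have hi : Integrable fun x : ℝ => f x := integrable_of_decay f hc C R₁ hR₁ hb
  have key : ∀ R : ℝ, R₁ ≤ R → ‖∫ x in (-R)..R, f x‖ ≤ 4 * C / R := by
    intro R hR
    have hR0 : (0:ℝ) < R := lt_of_lt_of_le (by linarith) hR
    have hrect := Complex.integral_boundary_rect_eq_zero_of_differentiableOn f
      (⟨-R, -R⟩ : ℂ) (⟨R, 0⟩ : ℂ) ?diff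
    case diff =>
      intro z hz
      rw [Complex.mem_reProdIm] at hz
      have : z.im ≤ 0 := by
        have := hz.2
        rw [show ((⟨-R,-R⟩ : ℂ)).im = -R from rfl, show ((⟨R,0⟩ : ℂ)).im = 0 from rfl,
          Set.uIcc_of_le (by linarith)] at this
        exact this.2
      exact (hd z this).differentiableWithinAt
    rw [show ((⟨-R,-R⟩ : ℂ)).re = -R from rfl, show ((⟨-R,-R⟩ : ℂ)).im = -R from rfl,
      show ((⟨R,0⟩ : ℂ)).re = R from rfl, show ((⟨R,0⟩ : ℂ)).im = 0 from rfl] at hrect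
    simp only [Complex.ofReal_zero, zero_mul, add_zero, smul_eq_mul] at hrect
    have hmk : ∀ x y : ℝ, ((x:ℂ) + (y:ℂ) * I) = (⟨x, y⟩ : ℂ) := by
      intro x y; exact (Complex.mk_eq_add_mul_I x y).symm
    simp only [hmk] at hrect
    have hB : ∫ x in (-R)..R, f x = (∫ x in (-R)..R, f ⟨x, -R⟩)
        + I * (∫ y in (-R)..0, f ⟨R, y⟩) - I * (∫ y in (-R)..0, f ⟨-R, y⟩) := by
      linear_combination -hrect
    have hRR₁ : R₁ ≤ R := hR
    have bndA : ‖∫ x in (-R)..R, f ⟨x, -R⟩‖ ≤ C / R ^ 2 * |R - (-R)| := by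
      apply intervalIntegral.norm_integral_le_of_norm_le_const
      intro x _
      have h1 : ((⟨x, -R⟩ : ℂ)).im ≤ 0 := by simp only [show ((⟨x,-R⟩:ℂ)).im = -R from rfl]; linarith
      have h2 : R ≤ ‖(⟨x, -R⟩ : ℂ)‖ := by
        have h3 := Complex.abs_im_le_norm (⟨x, -R⟩ : ℂ)
        rw [show ((⟨x,-R⟩:ℂ)).im = -R from rfl, abs_neg, abs_of_pos hR0] at h3
        exact h3
      calc ‖f ⟨x, -R⟩‖ ≤ C / ‖(⟨x,-R⟩:ℂ)‖^2 := hb _ h1 (le_trans hRR₁ h2)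
        _ ≤ C / R^2 := by gcongr
    have bndC : ‖∫ y in (-R)..0, f ⟨R, y⟩‖ ≤ C / R ^ 2 * |0 - (-R)| := by
      apply intervalIntegral.norm_integral_le_of_norm_le_const
      intro y hy
      rw [Set.uIoc_of_le (by linarith : -R ≤ 0)] at hy
      have h1 : ((⟨R, y⟩ : ℂ)).im ≤ 0 := hy.2
      have h2 : R ≤ ‖(⟨R, y⟩ : ℂ)‖ := by
        have h3 := Complex.abs_re_le_norm (⟨R, y⟩ : ℂ)
        rw [show ((⟨R,y⟩:ℂ)).re = R from rfl, abs_of_pos hR0] at h3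
        exact h3
      calc ‖f ⟨R, y⟩‖ ≤ C / ‖(⟨R,y⟩:ℂ)‖^2 := hb _ h1 (le_trans hRR₁ h2)
        _ ≤ C / R^2 := by gcongr
    have bndD : ‖∫ y in (-R)..0, f ⟨-R, y⟩‖ ≤ C / R ^ 2 * |0 - (-R)| := by
      apply intervalIntegral.norm_integral_le_of_norm_le_const
      intro y hy
      rw [Set.uIoc_of_le (by linarith : -R ≤ 0)] at hy
      have h1 : ((⟨-R, y⟩ : ℂ)).im ≤ 0 := hy.2
      have h2 : R ≤ ‖(⟨-R, y⟩ : ℂ)‖ := by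
        have h3 := Complex.abs_re_le_norm (⟨-R, y⟩ : ℂ)
        rw [show ((⟨-R,y⟩:ℂ)).re = -R from rfl, abs_neg, abs_of_pos hR0] at h3
        exact h3
      calc ‖f ⟨-R, y⟩‖ ≤ C / ‖(⟨-R,y⟩:ℂ)‖^2 := hb _ h1 (le_trans hRR₁ h2)
        _ ≤ C / R^2 := by gcongr
    rw [hB]
    have e1 : |R - (-R)| = 2 * R := by rw [abs_of_pos (by linarith)]; ring
    have e2 : |(0:ℝ) - (-R)| = R := by rw [abs_of_pos (by linarith)]; ring
    rw [e1] at bndA; rw [e2] at bndC; rw [e2] at bndD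
    have nI : ∀ X : ℂ, ‖I * X‖ = ‖X‖ := by
      intro X; rw [norm_mul, Complex.norm_I, one_mul]
    calc ‖(∫ x in (-R)..R, f ⟨x, -R⟩) + I * (∫ y in (-R)..0, f ⟨R, y⟩)
          - I * (∫ y in (-R)..0, f ⟨-R, y⟩)‖
        ≤ ‖(∫ x in (-R)..R, f ⟨x, -R⟩) + I * (∫ y in (-R)..0, f ⟨R, y⟩)‖
          + ‖I * (∫ y in (-R)..0, f ⟨-R, y⟩)‖ := norm_sub_le _ _
      _ ≤ ‖∫ x in (-R)..R, f ⟨x, -R⟩‖ + ‖I * (∫ y in (-R)..0, f ⟨R, y⟩)‖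
          + ‖I * (∫ y in (-R)..0, f ⟨-R, y⟩)‖ := by gcongr; exact norm_add_le _ _
      _ ≤ C / R^2 * (2 * R) + C / R^2 * R + C / R^2 * R := by
          rw [nI, nI]; gcongr <;> assumption
      _ = 4 * C / R := by field_simp; ring
  have T1 : Tendsto (fun R : ℝ => ∫ x in (-R)..R, f x) atTop (𝓝 (∫ x : ℝ, f x)) :=
    intervalIntegral_tendsto_integral hi tendsto_neg_atTop_atBot tendsto_id
  have T2 : Tendsto (fun R : ℝ => ∫ x in (-R)..R, f x) atTop (𝓝 0) := by
    apply squeeze_zero_norm' ((eventually_ge_atTop R₁).mono key)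
    have : Tendsto (fun R : ℝ => (4 * C) / R) atTop (𝓝 0) :=
      tendsto_const_nhds.div_atTop tendsto_id
    simpa using this
  exact tendsto_nhds_unique T1 T2

section TM
variable {a : ℕ → ℂ}

lemma sub_a_ne (ha : ∀ k, 0 < (a k).im) (i : ℕ) {z : ℂ} (hz : z.im ≤ 0) : z - a i ≠ 0 := by
  intro h
  have h2 : z = a i := sub_eq_zero.mp h
  rw [h2] at hz; linarith [ha i]

lemma sub_conj_ne (ha : ∀ k, 0 < (a k).im) (i : ℕ) (x : ℝ) :
    (x:ℂ) - starRingEnd ℂ (a i) ≠ 0 := by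
  intro h
  have h2 := congrArg Complex.im h
  simp only [Complex.sub_im, Complex.ofReal_im, Complex.conj_im, Complex.zero_im] at h2
  linarith [ha i]

lemma chi_abs (ha2 : ∀ k, a k ^ 2 ≠ -1) (i : ℕ) : ‖chi a i‖ = 1 := by
  have hne : (1 + a i ^ 2) ≠ 0 := by
    intro h; exact ha2 i (by linear_combination h)
  have habs : ‖1 + a i ^ 2‖ ≠ 0 := by
    simpa using hne
  rw [chi, norm_div, Complex.norm_real, norm_norm]
  exact div_self habs

lemma blaschke_abs (ha : ∀ k, 0 < (a k).im) (ha2 : ∀ k, a k ^ 2 ≠ -1) (j : ℕ) (x : ℝ) :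
    ‖Blaschke a j x‖ = 1 := by
  rw [Blaschke, norm_prod]
  apply Finset.prod_eq_one
  intro i _
  have h1 : ((x:ℂ) - starRingEnd ℂ (a i)) = starRingEnd ℂ ((x:ℂ) - a i) := by
    rw [map_sub, Complex.conj_ofReal]
  rw [norm_div, norm_mul, chi_abs ha2, one_mul, h1, Complex.norm_conj]
  exact div_self (norm_ne_zero_iff.mpr (sub_a_ne ha i (z := (x:ℂ)) (by simp)))

lemma conj_blaschke_prod (ha : ∀ k, 0 < (a k).im) (ha2 : ∀ k, a k ^ 2 ≠ -1)
    {j k : ℕ} (hjk : j ≤ k) (x : ℝ) :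
    Blaschke a j x * starRingEnd ℂ (Blaschke a k x) =
      ∏ i ∈ Finset.Ico j k,
        starRingEnd ℂ (chi a i) * ((x:ℂ) - starRingEnd ℂ (a i)) / ((x:ℂ) - a i) := by
  have hsplit : Blaschke a k x = Blaschke a j x *
      ∏ i ∈ Finset.Ico j k, chi a i * ((x:ℂ) - a i) / ((x:ℂ) - starRingEnd ℂ (a i)) :=
    (Finset.prod_range_mul_prod_Ico _ hjk).symm
  have hone : Blaschke a j x * starRingEnd ℂ (Blaschke a j x) = 1 := by
    rw [Complex.mul_conj, ← Complex.sq_norm, blaschke_abs ha ha2]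
    norm_num
  rw [hsplit, map_mul, ← mul_assoc, hone, one_mul, map_prod]
  apply Finset.prod_congr rfl
  intro i _
  rw [map_div₀, map_mul, map_sub, map_sub, Complex.conj_ofReal,
    Complex.conj_conj]

lemma offdiag (ha : ∀ k, 0 < (a k).im) (ha2 : ∀ k, a k ^ 2 ≠ -1)
    {j k : ℕ} (hjk : j < k) :
    ∫ x : ℝ, Phi a j x * starRingEnd ℂ (Phi a k x) = 0 := by
  set c : ℂ := (Real.sqrt ((a j).im) : ℂ) * (Real.sqrt ((a k).im) : ℂ) *
    ∏ i ∈ Finset.Ico j k, starRingEnd ℂ (chi a i) with hc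
  set G : ℂ → ℂ := fun z => c *
    (∏ i ∈ Finset.Ico (j+1) k, (z - starRingEnd ℂ (a i)) / (z - a i)) /
    ((z - a j) * (z - a k)) with hG
  have hFG : ∀ x : ℝ, Phi a j x * starRingEnd ℂ (Phi a k x) = G x := by
    intro x
    have hnaj := sub_a_ne ha j (z := (x:ℂ)) (by simp)
    have hnak := sub_a_ne ha k (z := (x:ℂ)) (by simp)
    have hncj := sub_conj_ne ha j x
    have hnck := sub_conj_ne ha k x
    rw [Phi, Phi, map_div₀, map_mul, map_sub, Complex.conj_ofReal, Complex.conj_conj,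
      Complex.conj_ofReal]
    rw [div_mul_div_comm]
    rw [show (Real.sqrt ((a j).im) : ℂ) * Blaschke a j ↑x *
        ((Real.sqrt ((a k).im) : ℂ) * starRingEnd ℂ (Blaschke a k ↑x)) =
      (Real.sqrt ((a j).im) : ℂ) * (Real.sqrt ((a k).im) : ℂ) *
        (Blaschke a j ↑x * starRingEnd ℂ (Blaschke a k ↑x)) by ring]
    rw [conj_blaschke_prod ha ha2 hjk.le x]
    have hterm : ∀ i ∈ Finset.Ico j k,
        starRingEnd ℂ (chi a i) * ((x:ℂ) - starRingEnd ℂ (a i)) / ((x:ℂ) - a i) =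
        starRingEnd ℂ (chi a i) * (((x:ℂ) - starRingEnd ℂ (a i)) / ((x:ℂ) - a i)) := by
      intro i _; rw [mul_div_assoc]
    rw [Finset.prod_congr rfl hterm, Finset.prod_mul_distrib]
    rw [Finset.prod_eq_prod_Ico_succ_bot hjk
      (fun i => ((x:ℂ) - starRingEnd ℂ (a i)) / ((x:ℂ) - a i))]
    have hprod : (∏ i ∈ Finset.Ico (j+1) k, ((x:ℂ) - a i)) ≠ 0 :=
      Finset.prod_ne_zero_iff.mpr (fun i _ => sub_a_ne ha i (z := (x:ℂ)) (by simp))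
    rw [hG, hc]
    field_simp [hprod]
  rw [MeasureTheory.integral_congr_ae (Filter.Eventually.of_forall hFG)]
  have hdG : ∀ z : ℂ, z.im ≤ 0 → DifferentiableAt ℂ G z := by
    intro z hz
    apply DifferentiableAt.div
    · apply DifferentiableAt.mul (differentiableAt_const c)
      apply DifferentiableAt.fun_finsetProd
      intro i _
      exact DifferentiableAt.div (differentiableAt_id.sub (differentiableAt_const _))
        (differentiableAt_id.sub (differentiableAt_const _)) (sub_a_ne ha i hz)
    · exact (differentiableAt_id.sub (differentiableAt_const _)).mul
        (differentiableAt_id.sub (differentiableAt_const _))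
    · exact mul_ne_zero (sub_a_ne ha j hz) (sub_a_ne ha k hz)
  set M : ℝ := 1 + ∑ i ∈ Finset.range (k+1), ‖a i‖ with hM
  have hM1 : 1 ≤ M := le_add_of_nonneg_right
    (Finset.sum_nonneg fun i _ => norm_nonneg _)
  have hai : ∀ i, i ≤ k → ‖a i‖ ≤ M := by
    intro i hi
    have := Finset.single_le_sum (f := fun i => ‖a i‖)
      (fun i _ => norm_nonneg _) (Finset.mem_range.mpr (Nat.lt_succ_of_le hi))
    linarith
  have hbG : ∀ z : ℂ, z.im ≤ 0 → 2 * M ≤ ‖z‖ →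
      ‖G z‖ ≤ 4 ^ (k+1) * ‖c‖ / ‖z‖ ^ 2 := by
    intro z hz hzn
    have hz0 : (0:ℝ) < ‖z‖ := lt_of_lt_of_le (by linarith) hzn
    have hlow : ∀ i, i ≤ k → ‖z‖ / 2 ≤ ‖z - a i‖ := by
      intro i hi
      have h1 := norm_sub_norm_le z (a i)
      have := hai i hi
      linarith
    have hup : ∀ i, i ≤ k → ‖z - starRingEnd ℂ (a i)‖ ≤ 2 * ‖z‖ := by
      intro i hi
      have h1 := norm_sub_le z (starRingEnd ℂ (a i))
      have h2 : ‖starRingEnd ℂ (a i)‖ = ‖a i‖ := RCLike.norm_conj _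
      have := hai i hi
      linarith
    have hratio : ∀ i ∈ Finset.Ico (j+1) k,
        ‖(z - starRingEnd ℂ (a i)) / (z - a i)‖ ≤ 4 := by
      intro i hi
      have hik : i ≤ k := (Finset.mem_Ico.mp hi).2.le
      rw [norm_div, div_le_iff₀ (lt_of_lt_of_le (by linarith) (hlow i hik))]
      have := hup i hik
      have := hlow i hik
      linarith
    have hprodb : ‖∏ i ∈ Finset.Ico (j+1) k,
        (z - starRingEnd ℂ (a i)) / (z - a i)‖ ≤ 4 ^ k := by
      rw [norm_prod]
      calc ∏ i ∈ Finset.Ico (j+1) k, ‖(z - starRingEnd ℂ (a i)) / (z - a i)‖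
          ≤ ∏ _i ∈ Finset.Ico (j+1) k, (4:ℝ) :=
            Finset.prod_le_prod (fun i _ => norm_nonneg _) hratio
        _ = 4 ^ (Finset.Ico (j+1) k).card := Finset.prod_const 4
        _ ≤ 4 ^ k := by
            apply pow_le_pow_right₀ (by norm_num)
            rw [Nat.card_Ico]; omega
    have hden : ‖z‖ ^ 2 / 4 ≤ ‖(z - a j) * (z - a k)‖ := by
      rw [norm_mul]
      have h1 := hlow j hjk.le
      have h2 := hlow k le_rfl
      calc ‖z‖ ^ 2 / 4 = (‖z‖/2) * (‖z‖/2) := by ring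
        _ ≤ ‖z - a j‖ * ‖z - a k‖ :=
          mul_le_mul h1 h2 (by positivity) (norm_nonneg _)
    have hGeq : ‖G z‖ = ‖c * ∏ i ∈ Finset.Ico (j+1) k,
        (z - starRingEnd ℂ (a i)) / (z - a i)‖ / ‖(z - a j) * (z - a k)‖ := by
      rw [hG]; exact norm_div _ _
    have hnum : ‖c * ∏ i ∈ Finset.Ico (j+1) k,
        (z - starRingEnd ℂ (a i)) / (z - a i)‖ ≤ ‖c‖ * 4 ^ k := by
      rw [norm_mul]
      exact mul_le_mul_of_nonneg_left hprodb (norm_nonneg _)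
    rw [hGeq]
    calc ‖c * ∏ i ∈ Finset.Ico (j+1) k,
          (z - starRingEnd ℂ (a i)) / (z - a i)‖ / ‖(z - a j) * (z - a k)‖
        ≤ (‖c‖ * 4 ^ k) / (‖z‖ ^ 2 / 4) :=
          div_le_div₀ (by positivity) hnum (by positivity) hden
      _ = 4 ^ (k+1) * ‖c‖ / ‖z‖ ^ 2 := by
          rw [pow_succ]
          field_simp
          ring
  exact halfplane_integral_zero G hdG (4 ^ (k+1) * ‖c‖) (2 * M)
    (by positivity) (by linarith) hbG

lemma diag (ha : ∀ k, 0 < (a k).im) (ha2 : ∀ k, a k ^ 2 ≠ -1) (j : ℕ) :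
    ∫ x : ℝ, Phi a j x * starRingEnd ℂ (Phi a j x) = (Real.pi : ℂ) := by
  have h : ∀ x : ℝ, Phi a j x * starRingEnd ℂ (Phi a j x) =
      ((((a j).im) / ((x - (a j).re)^2 + ((a j).im)^2) : ℝ) : ℂ) := by
    intro x
    rw [Complex.mul_conj]
    have h2 : Complex.normSq (Phi a j ↑x) =
        (a j).im / ((x - (a j).re)^2 + (a j).im^2) := by
      rw [← Complex.sq_norm]
      rw [Phi, norm_div, norm_mul, Complex.norm_real, Real.norm_eq_abs, blaschke_abs ha ha2, mul_one]
      rw [div_pow, _root_.abs_of_nonneg (Real.sqrt_nonneg _), Real.sq_sqrt (ha j).le]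
      congr 1
      rw [Complex.sq_norm, Complex.normSq_apply]
      simp only [Complex.sub_re, Complex.sub_im, Complex.ofReal_re, Complex.ofReal_im,
        Complex.conj_re, Complex.conj_im]
      ring
    rw [h2]
  simp_rw [h]
  have h3 := integral_ofReal (𝕜 := ℂ) (μ := (volume : Measure ℝ))
    (f := fun x : ℝ => (a j).im / ((x - (a j).re)^2 + (a j).im^2))
  rw [cauchy_int (a j).re (a j).im (ha j)] at h3
  exact h3

end TM

/-- Orthonormality of the Takenaka–Malmqvist system:
(1/π) ∫ Φ_j(x) conj(Φ_k(x)) dx = δ_{jk}. -/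
theorem stmt_0 (a : ℕ → ℂ) (ha : ∀ k, 0 < (a k).im) (ha2 : ∀ k, a k ^ 2 ≠ -1)
    (j k : ℕ) :
    (1 / Real.pi : ℂ) * ∫ x : ℝ, Phi a j x * starRingEnd ℂ (Phi a k x) =
      if j = k then 1 else 0 := by
  by_cases hjk : j = k
  · subst hjk
    rw [if_pos rfl, diag ha ha2 j]
    rw [one_div, inv_mul_cancel₀ (Complex.ofReal_ne_zero.mpr Real.pi_ne_zero)]
  · rw [if_neg hjk]
    rcases lt_or_gt_of_ne hjk with h | h
    · rw [offdiag ha ha2 h, mul_zero]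
    · have h2 : ∀ x : ℝ, Phi a j x * starRingEnd ℂ (Phi a k x) =
          starRingEnd ℂ (Phi a k x * starRingEnd ℂ (Phi a j x)) := by
        intro x; rw [map_mul, Complex.conj_conj]; ring
      rw [MeasureTheory.integral_congr_ae (Filter.Eventually.of_forall h2),
        integral_conj, offdiag ha ha2 h, map_zero, mul_zero]
end

section
/- (Dzhrbashyan identity / Christoffel–Darboux analogue.) For every positive integer n and all z, ζ ∈ ℂ with z ≠ conj(ζ), z ≠ conj(a_k) and ζ ≠ conj(a_k) for k = 1, …, n, one has 1/(2i(conj(ζ) − z)) = Σ_{j=1}^{n} conj(Φ_j(ζ)) · Φ_j(z) + conj(B_{n+1}(ζ)) · B_{n+1}(z)/(2i(conj(ζ) − z)). -/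
open MeasureTheory Complex

lemma step (a : ℕ → ℂ) (n : ℕ) (ha : 0 < (a n).im) (h2 : (1 : ℂ) + a n ^ 2 ≠ 0)
    (z ζ : ℂ) (hzζ : z ≠ starRingEnd ℂ ζ) (hz : z ≠ starRingEnd ℂ (a n))
    (hζ : ζ ≠ starRingEnd ℂ (a n)) :
    starRingEnd ℂ (Blaschke a n ζ) * Blaschke a n z / (2 * I * (starRingEnd ℂ ζ - z)) =
      starRingEnd ℂ (Phi a n ζ) * Phi a n z +
        starRingEnd ℂ (Blaschke a (n + 1) ζ) * Blaschke a (n + 1) z /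
          (2 * I * (starRingEnd ℂ ζ - z)) := by
  have hd : starRingEnd ℂ ζ - z ≠ 0 := fun h => hzζ (by linear_combination -h)
  have hzd : z - starRingEnd ℂ (a n) ≠ 0 := sub_ne_zero.2 hz
  have hζd : starRingEnd ℂ ζ - a n ≠ 0 := by
    intro h
    exact hζ (by simpa using congrArg (starRingEnd ℂ) (sub_eq_zero.1 h))
  have hchi : starRingEnd ℂ (chi a n) * chi a n = 1 := by
    unfold chi
    rw [map_div₀, Complex.conj_ofReal, div_mul_div_comm, ← Complex.ofReal_mul,
      ← sq, ← Complex.normSq_eq_norm_sq, mul_comm (starRingEnd ℂ _), Complex.mul_conj]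
    exact div_self (by exact_mod_cast ((Complex.normSq_pos.2 h2).ne'))
  have hchi0 : chi a n ≠ 0 := fun h => by simp [h] at hchi
  have hcc : starRingEnd ℂ (chi a n) = (chi a n)⁻¹ :=
    eq_inv_of_mul_eq_one_left hchi
  have hs : ((Real.sqrt (a n).im : ℝ) : ℂ) * ((Real.sqrt (a n).im : ℝ) : ℂ) = ((a n).im : ℂ) := by
    rw [← Complex.ofReal_mul, Real.mul_self_sqrt ha.le]
  have hB1 : Blaschke a (n + 1) z = Blaschke a n z * (chi a n * (z - a n) / (z - starRingEnd ℂ (a n))) :=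
    Finset.prod_range_succ _ _
  have hB2 : Blaschke a (n + 1) ζ = Blaschke a n ζ * (chi a n * (ζ - a n) / (ζ - starRingEnd ℂ (a n))) :=
    Finset.prod_range_succ _ _
  have hsub : a n - starRingEnd ℂ (a n) = 2 * ((a n).im : ℂ) * I := by
    rw [Complex.sub_conj]; push_cast; ring
  rw [hB1, hB2]
  unfold Phi
  simp only [map_mul, map_div₀, map_sub, Complex.conj_ofReal, Complex.conj_conj, hcc]
  set B1 := Blaschke a n z
  set B2 := starRingEnd ℂ (Blaschke a n ζ)
  set w := starRingEnd ℂ ζ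
  set α := a n
  set β := starRingEnd ℂ (a n)
  set s := ((Real.sqrt (a n).im : ℝ) : ℂ)
  field_simp
  linear_combination (B2 * B1 * (w - z)) * hsub - (B2 * B1 * 2 * I * (w - z)) * hs

/-- Dzhrbashyan identity (Christoffel–Darboux analogue):
1/(2i(conj ζ − z)) = Σ_{j=1}^n conj(Φ_j(ζ)) Φ_j(z) + conj(B_{n+1}(ζ)) B_{n+1}(z)/(2i(conj ζ − z)).
Here `Blaschke a n` is the paper's B_{n+1}. -/
theorem stmt_1 (a : ℕ → ℂ) (ha : ∀ k, 0 < (a k).im) (ha2 : ∀ k, a k ^ 2 ≠ -1)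
    (n : ℕ) (hn : 1 ≤ n) (z ζ : ℂ) (hzζ : z ≠ starRingEnd ℂ ζ)
    (hz : ∀ k < n, z ≠ starRingEnd ℂ (a k)) (hζ : ∀ k < n, ζ ≠ starRingEnd ℂ (a k)) :
    1 / (2 * I * (starRingEnd ℂ ζ - z)) =
      (∑ j ∈ Finset.range n, starRingEnd ℂ (Phi a j ζ) * Phi a j z) +
        starRingEnd ℂ (Blaschke a n ζ) * Blaschke a n z /
          (2 * I * (starRingEnd ℂ ζ - z)) := by
  clear hn
  induction n with
  | zero => simp [Blaschke]
  | succ n ih =>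
    have hz' : ∀ k < n, z ≠ starRingEnd ℂ (a k) := fun k hk => hz k (hk.trans n.lt_succ_self)
    have hζ' : ∀ k < n, ζ ≠ starRingEnd ℂ (a k) := fun k hk => hζ k (hk.trans n.lt_succ_self)
    rw [Finset.sum_range_succ, add_assoc, ← step a n (ha n)
      (fun h => ha2 n (by linear_combination h)) z ζ hzζ (hz n n.lt_succ_self)
      (hζ n n.lt_succ_self)]
    exact ih hz' hζ'
end

section
/- For every λ > 0 and all nonnegative integers k and j, ∫_{-∞}^{∞} dt/((iλ − t)^{k+1} (−iλ − t)^{j+1}) = (π/λ) · (−1)^{j} · binom(j+k, j)/(2iλ)^{j+k}. -/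
open MeasureTheory Complex

open Filter Topology

namespace Stmt7

noncomputable def gg (lam : ℝ) (p q : ℕ) (t : ℝ) : ℂ :=
  ((I * lam - t) ^ p * (-(I * lam) - t) ^ q)⁻¹

variable {lam : ℝ}

lemma hA (hlam : 0 < lam) (t : ℝ) : (I * (lam:ℂ) - t) ≠ 0 := by
  intro h
  have := congrArg Complex.im h
  simp at this
  linarith

lemma hB (hlam : 0 < lam) (t : ℝ) : (-(I * (lam:ℂ)) - t) ≠ 0 := by
  intro h
  have := congrArg Complex.im h
  simp at this
  linarith

lemma normA (t : ℝ) : ‖(I * (lam:ℂ) - t)‖ = Real.sqrt (t^2 + lam^2) := by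
  rw [Complex.norm_def]
  congr 1
  simp [Complex.normSq_apply]
  ring

lemma normB (t : ℝ) : ‖(-(I * (lam:ℂ)) - t)‖ = Real.sqrt (t^2 + lam^2) := by
  rw [Complex.norm_def]
  congr 1
  simp [Complex.normSq_apply]
  ring

lemma norm_gg (p q : ℕ) (t : ℝ) :
    ‖gg lam p q t‖ = ((Real.sqrt (t^2 + lam^2)) ^ (p + q))⁻¹ := by
  rw [gg, norm_inv, norm_mul, norm_pow, norm_pow, normA, normB, ← pow_add]

end Stmt7
namespace Stmt7
variable {lam : ℝ}

lemma sqrt_pos (hlam : 0 < lam) (t : ℝ) : 0 < Real.sqrt (t^2 + lam^2) := by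
  apply Real.sqrt_pos.2; positivity

lemma lam_le_sqrt (hlam : 0 < lam) (t : ℝ) : lam ≤ Real.sqrt (t^2 + lam^2) := by
  rw [show t^2 + lam^2 = lam^2 + t^2 by ring]
  exact (Real.le_sqrt hlam.le (by positivity)).2 (by nlinarith)

lemma abs_le_sqrt' (t : ℝ) : |t| ≤ Real.sqrt (t^2 + lam^2) := by
  refine (Real.le_sqrt (abs_nonneg t) (by positivity)).2 ?_
  rw [_root_.sq_abs]
  nlinarith

lemma sq_sqrt' (hlam : 0 < lam) (t : ℝ) :
    (Real.sqrt (t^2 + lam^2))^2 = t^2 + lam^2 := by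
  apply Real.sq_sqrt; positivity

lemma gg_bound (hlam : 0 < lam) (p q n : ℕ) (hn : p + q = n + 2) (t : ℝ) :
    ‖gg lam p q t‖ ≤ (lam ^ n)⁻¹ * (t^2 + lam^2)⁻¹ := by
  rw [norm_gg, hn, ← mul_inv]
  apply inv_anti₀
  · positivity
  · calc lam ^ n * (t^2 + lam^2) ≤ (Real.sqrt (t^2+lam^2)) ^ n * (t^2 + lam^2) := by
          gcongr
          exact lam_le_sqrt hlam t
      _ = (Real.sqrt (t^2+lam^2)) ^ (n + 2) := by rw [pow_add, sq_sqrt' hlam]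

lemma integrable_inv_sq_add (hlam : 0 < lam) :
    Integrable (fun t : ℝ => (t^2 + lam^2)⁻¹) := by
  have h := (integrable_inv_one_add_sq.comp_div (R := lam) hlam.ne').const_mul ((lam^2)⁻¹)
  refine h.congr (Eventually.of_forall fun t => ?_)
  field_simp
  ring

lemma continuous_gg (hlam : 0 < lam) (p q : ℕ) : Continuous (gg lam p q) := by
  apply Continuous.inv₀
  · fun_prop
  · intro t
    exact mul_ne_zero (pow_ne_zero _ (hA hlam t)) (pow_ne_zero _ (hB hlam t))

lemma integrable_gg (hlam : 0 < lam) (p q : ℕ) (h : 2 ≤ p + q) :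
    Integrable (gg lam p q) := by
  obtain ⟨n, hn⟩ : ∃ n, p + q = n + 2 := ⟨p + q - 2, by omega⟩
  apply Integrable.mono' (((integrable_inv_sq_add hlam).const_mul ((lam^n)⁻¹)))
    (continuous_gg hlam p q).aestronglyMeasurable
  exact Eventually.of_forall (gg_bound hlam p q n hn)

lemma tendsto_gg_zero (hlam : 0 < lam) (p q : ℕ) (h : 1 ≤ p + q)
    (l : Filter ℝ) (hl : Tendsto (fun t : ℝ => |t|) l atTop) :
    Tendsto (gg lam p q) l (𝓝 0) := by
  rw [tendsto_zero_iff_norm_tendsto_zero]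
  obtain ⟨m, hm⟩ : ∃ m, p + q = m + 1 := ⟨p + q - 1, by omega⟩
  have key : ∀ t : ℝ, ‖gg lam p q t‖ ≤ (lam ^ m)⁻¹ * (Real.sqrt (t^2 + lam^2))⁻¹ := by
    intro t
    rw [norm_gg, hm, ← mul_inv]
    apply inv_anti₀
    · have := sqrt_pos hlam t
      positivity
    · calc lam ^ m * Real.sqrt (t^2 + lam^2)
            ≤ (Real.sqrt (t^2 + lam^2)) ^ m * Real.sqrt (t^2 + lam^2) :=
          mul_le_mul_of_nonneg_right (pow_le_pow_left₀ hlam.le (lam_le_sqrt hlam t) m)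
            (Real.sqrt_nonneg _)
        _ = (Real.sqrt (t^2 + lam^2)) ^ (m + 1) := (pow_succ _ m).symm
  have hsq : Tendsto (fun t : ℝ => Real.sqrt (t^2 + lam^2)) l atTop :=
    tendsto_atTop_mono (fun t => abs_le_sqrt' t) hl
  have h2 : Tendsto (fun t : ℝ => (lam ^ m)⁻¹ * (Real.sqrt (t^2 + lam^2))⁻¹) l (𝓝 0) := by
    rw [show (0:ℝ) = (lam ^ m)⁻¹ * 0 by ring]
    exact (hsq.inv_tendsto_atTop).const_mul _
  exact squeeze_zero (fun t => norm_nonneg _) key h2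

end Stmt7
namespace Stmt7
variable {lam : ℝ}

lemma D1 (c : ℂ) (p : ℕ) (z : ℂ) (h : c - z ≠ 0) :
    HasDerivAt (fun z : ℂ => ((c - z) ^ p)⁻¹) (p * ((c - z) ^ (p + 1))⁻¹) z := by
  have inner : HasDerivAt (fun z : ℂ => c - z) (-1) z := by
    simpa using (hasDerivAt_id z).const_sub c
  have outer := hasDerivAt_zpow (-(p:ℤ)) (c - z) (Or.inl h)
  have := outer.comp z inner
  have hf : ((fun x : ℂ => x ^ (-(p:ℤ))) ∘ HSub.hSub c) = (fun z : ℂ => ((c - z) ^ p)⁻¹) := by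
    funext w
    simp [zpow_neg]
  rw [hf] at this
  refine this.congr_deriv ?_
  · have h1 : (-(p:ℤ) - 1) = -((p+1 : ℕ) : ℤ) := by push_cast; ring
    rw [h1, zpow_neg, zpow_natCast]
    push_cast
    ring

lemma integral_deriv_zero (f f' : ℝ → ℂ) (hderiv : ∀ x : ℝ, HasDerivAt f (f' x) x)
    (hint : Integrable f') (hbot : Tendsto f atBot (𝓝 0))
    (htop : Tendsto f atTop (𝓝 0)) : ∫ x : ℝ, f' x = 0 := by
  rw [← intervalIntegral.integral_Iic_add_Ioi (b := 0) hint.integrableOn hint.integrableOn]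
  rw [integral_Iic_of_hasDerivAt_of_tendsto' (fun x _ => hderiv x) hint.integrableOn hbot,
    integral_Ioi_of_hasDerivAt_of_tendsto' (fun x _ => hderiv x) hint.integrableOn htop]
  ring

end Stmt7
namespace Stmt7
variable {lam : ℝ}

lemma hasDerivAt_gg (hlam : 0 < lam) (p q : ℕ) (t : ℝ) :
    HasDerivAt (gg lam p q)
      ((p : ℂ) * gg lam (p+1) q t + (q : ℂ) * gg lam p (q+1) t) t := by
  have h1 := (((D1 (I * lam) p t (hA hlam t)).mul
    (D1 (-(I * lam)) q t (hB hlam t))).comp_ofReal)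
  convert h1 using 1
  · funext y
    simp [gg, mul_inv, mul_comm]
  · simp only [gg, mul_inv]
    ring

lemma ibp (hlam : 0 < lam) (p q : ℕ) :
    ∫ t : ℝ, gg lam (p+2) (q+1) t
      = -(((q:ℂ)+1)/((p:ℂ)+1)) * ∫ t : ℝ, gg lam (p+1) (q+2) t := by
  have hzero : ∫ t : ℝ, (((p:ℂ)+1) * gg lam (p+2) (q+1) t
      + ((q:ℂ)+1) * gg lam (p+1) (q+2) t) = 0 := by
    apply integral_deriv_zero (gg lam (p+1) (q+1))
    · intro t
      have := hasDerivAt_gg hlam (p+1) (q+1) t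
      push_cast at this ⊢
      convert this using 1
    · exact (((integrable_gg hlam _ _ (by omega)).const_mul _).add
        ((integrable_gg hlam _ _ (by omega)).const_mul _))
    · exact tendsto_gg_zero hlam _ _ (by omega) _ tendsto_abs_atBot_atTop
    · exact tendsto_gg_zero hlam _ _ (by omega) _ tendsto_abs_atTop_atTop
  rw [integral_add ((integrable_gg hlam _ _ (by omega)).const_mul _)
      ((integrable_gg hlam _ _ (by omega)).const_mul _),
    integral_const_mul, integral_const_mul] at hzero
  have hp : ((p:ℂ)+1) ≠ 0 := Nat.cast_add_one_ne_zero p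
  field_simp
  linear_combination hzero

lemma int_b_zero (hlam : 0 < lam) (m : ℕ) : ∫ t : ℝ, gg lam 0 (m+2) t = 0 := by
  have hm : ((m:ℂ)+1) ≠ 0 := Nat.cast_add_one_ne_zero m
  apply integral_deriv_zero (fun t => ((m:ℂ)+1)⁻¹ * gg lam 0 (m+1) t)
  · intro t
    have h := (hasDerivAt_gg hlam 0 (m+1) t).const_mul (((m:ℂ)+1)⁻¹)
    refine h.congr_deriv ?_
    push_cast
    simp [hm]
  · exact integrable_gg hlam _ _ (by omega)
  · rw [show (0:ℂ) = ((m:ℂ)+1)⁻¹ * 0 by ring]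
    exact (tendsto_gg_zero hlam 0 (m+1) (by omega) _ tendsto_abs_atBot_atTop).const_mul _
  · rw [show (0:ℂ) = ((m:ℂ)+1)⁻¹ * 0 by ring]
    exact (tendsto_gg_zero hlam 0 (m+1) (by omega) _ tendsto_abs_atTop_atTop).const_mul _

lemma pf_alg (A B : ℂ) (ha : A ≠ 0) (hb : B ≠ 0) (hba : B - A ≠ 0) (p q : ℕ) :
    (A^(p+1) * B^(q+1))⁻¹ = (B - A)⁻¹ * ((A^(p+1)*B^q)⁻¹ - (A^p*B^(q+1))⁻¹) := by
  have e1 : B * (A^(p+1)*B^(q+1))⁻¹ = (A^(p+1)*B^q)⁻¹ := by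
    rw [pow_succ B q, mul_inv, mul_inv, mul_inv]
    field_simp
  have e2 : A * (A^(p+1)*B^(q+1))⁻¹ = (A^p*B^(q+1))⁻¹ := by
    rw [pow_succ A p, mul_inv, mul_inv, mul_inv]
    field_simp
  rw [← e1, ← e2, ← sub_mul, ← mul_assoc, inv_mul_cancel₀ hba, one_mul]

lemma pf (hlam : 0 < lam) (p q : ℕ) (t : ℝ) :
    gg lam (p+1) (q+1) t
      = (-(2*I*lam))⁻¹ * (gg lam (p+1) q t - gg lam p (q+1) t) := by
  have ha := hA hlam t
  have hb := hB hlam t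
  simp only [gg]
  set A : ℂ := I * lam - t with hAdef
  set B : ℂ := -(I * lam) - t with hBdef
  have key : (-(2*I*(lam:ℂ))) = B - A := by rw [hAdef, hBdef]; ring
  have hba : B - A ≠ 0 := by
    rw [← key]
    simp [I_ne_zero, hlam.ne']
  rw [key]
  exact pf_alg A B ha hb hba p q

end Stmt7
namespace Stmt7
variable {lam : ℝ}

lemma base (hlam : 0 < lam) : ∫ t : ℝ, gg lam 1 1 t = (Real.pi / lam : ℂ) := by
  have hpt : ∀ t : ℝ, gg lam 1 1 t = ((((t^2 + lam^2)⁻¹ : ℝ)) : ℂ) := by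
    intro t
    rw [gg, pow_one, pow_one]
    have : (I*(lam:ℂ) - t) * (-(I*lam) - t) = ((t^2 + lam^2 : ℝ) : ℂ) := by
      push_cast
      ring_nf
      rw [I_sq]
      ring
    rw [this, Complex.ofReal_inv]
  have hreal : ∫ t : ℝ, (t^2 + lam^2)⁻¹ = Real.pi / lam := by
    have h1 : ∀ t : ℝ, (t^2+lam^2)⁻¹ = (lam^2)⁻¹ * (1+(t/lam)^2)⁻¹ := by
      intro t
      field_simp
      ring
    simp_rw [h1]
    rw [MeasureTheory.integral_const_mul,
      MeasureTheory.Measure.integral_comp_div (fun x : ℝ => (1+x^2)⁻¹) lam,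
      integral_univ_inv_one_add_sq, smul_eq_mul, abs_of_pos hlam]
    field_simp
  simp_rw [hpt]
  rw [show ((Real.pi : ℂ))/(lam:ℂ) = ((Real.pi/lam : ℝ) : ℂ) by push_cast; ring, ← hreal]
  exact integral_ofReal

lemma G1 (hlam : 0 < lam) (m : ℕ) :
    ∫ t : ℝ, gg lam 1 (m+1) t
      = ((-(2*I*(lam:ℂ)))⁻¹)^m * (Real.pi / lam : ℂ) := by
  induction m with
  | zero => simpa using base hlam
  | succ n ih =>
    have hrw : ∀ t : ℝ, gg lam 1 (n+2) t
        = (-(2*I*(lam:ℂ)))⁻¹ * (gg lam 1 (n+1) t - gg lam 0 (n+2) t) :=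
      pf hlam 0 (n+1)
    simp_rw [hrw]
    rw [MeasureTheory.integral_const_mul,
      integral_sub (integrable_gg hlam _ _ (by omega)) (integrable_gg hlam _ _ (by omega)),
      int_b_zero hlam n, sub_zero, ih, pow_succ]
    ring

lemma G (hlam : 0 < lam) : ∀ p q : ℕ,
    ∫ t : ℝ, gg lam (p+1) (q+1) t
      = (-1:ℂ)^p * ((p+q).choose p : ℂ) * ∫ t : ℝ, gg lam 1 (p+q+1) t := by
  intro p
  induction p with
  | zero => intro q; simp
  | succ n ih =>
    intro q
    rw [ibp hlam n q, ih (q+1)]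
    have harith : n + (q+1) + 1 = n + 1 + q + 1 := by omega
    rw [harith]
    have hch := Nat.choose_succ_right_eq (n+q+1) n
    have hch2 : (n + q + 1 - n) = q + 1 := by omega
    rw [hch2] at hch
    have hchc : ((n+q+1).choose (n+1) : ℂ) * ((n:ℂ)+1) = ((n+q+1).choose n : ℂ) * ((q:ℂ)+1) := by
      exact_mod_cast congrArg (fun x : ℕ => (x : ℂ)) hch
    have hn : ((n:ℂ)+1) ≠ 0 := Nat.cast_add_one_ne_zero n
    have harith2 : n + 1 + q = n + q + 1 := by omega
    rw [harith2, pow_succ]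
    rw [show n+(q+1) = n+q+1 from by omega]
    field_simp
    linear_combination (∫ t : ℝ, gg lam 1 (n+q+1+1) t) * hchc

end Stmt7

/-- ∫ dt/((iλ − t)^{k+1} (−iλ − t)^{j+1}) = (π/λ)(−1)^j C(j+k,j)/(2iλ)^{j+k}. -/
theorem stmt_7 (lam : ℝ) (hlam : 0 < lam) (k j : ℕ) :
    ∫ t : ℝ, 1 / ((I * lam - t) ^ (k + 1) * (-(I * lam) - t) ^ (j + 1)) =
      (Real.pi / lam : ℂ) * (-1) ^ j * ((j + k).choose j : ℂ) / (2 * I * lam) ^ (j + k) := by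
  have h1 : ∀ t : ℝ, 1 / ((I * (lam:ℂ) - t) ^ (k + 1) * (-(I * lam) - t) ^ (j + 1))
      = Stmt7.gg lam (k+1) (j+1) t := by
    intro t; rw [one_div, Stmt7.gg]
  simp_rw [h1]
  rw [Stmt7.G hlam k j, Stmt7.G1 hlam (k+j)]
  have hch : (((j+k).choose j : ℕ) : ℂ) = (((k+j).choose k : ℕ) : ℂ) := by
    congr 1
    rw [Nat.add_comm j k, ← Nat.choose_symm (Nat.le_add_right k j)]
    congr 1
    omega
  rw [hch, show j+k = k+j from Nat.add_comm j k]
  rw [inv_neg, neg_pow ((2*I*(lam:ℂ))⁻¹) (k+j), inv_pow]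
  have hsgn : (-1:ℂ)^k * (-1:ℂ)^(k+j) = (-1)^j := by
    rw [← pow_add, show k+(k+j) = 2*k+j from by ring, pow_add, pow_mul]
    norm_num
  rw [div_eq_mul_inv]
  linear_combination ((((k+j).choose k : ℕ) : ℂ) * (((2*I*(lam:ℂ))^(k+j))⁻¹)
    * ((Real.pi : ℂ) / lam)) * hsgn
end

section
/- Let n and k be nonnegative integers with n ≥ 1, let b_1, …, b_n ∈ ℂ, and let z ∈ ℂ with z ≠ b_j for all j. Then the k-th complex derivative of the function w ↦ ∏_{j=1}^{n} (w − b_j)^{−1} at z equals (−1)^{k} k! · ν_k(z, b)/τ_n(z, b), where τ_n(z, b) := ∏_{j=1}^{n} (z − b_j) and ν_k(z, b) := Σ_{k_1+⋯+k_n=k, k_i≥0} ∏_{j=1}^{n} (z − b_j)^{−k_j} (so ν_0 = 1). -/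
open MeasureTheory Complex

/-- τ_n(z, b) := ∏_{k=1}^n (z − b_k). -/
noncomputable def tau (n : ℕ) (z : ℂ) (b : ℕ → ℂ) : ℂ :=
  ∏ k ∈ Finset.range n, (z - b k)

/-- ν_m(z, b) := Σ_{k₁+⋯+k_n = m} ∏_{j=1}^n (z − b_j)^{−k_j}. -/
noncomputable def nu (n m : ℕ) (z : ℂ) (b : ℕ → ℂ) : ℂ :=
  ∑ k ∈ Finset.Nat.antidiagonalTuple n m, ∏ j : Fin n, ((z - b (j : ℕ)) ^ (k j))⁻¹

/-- Auxiliary sum: `S n k b z = Σ_{f ∈ piAntidiag (range n) k} Π_j (z - b j)^{-(f j + 1)}`. -/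
noncomputable def S (n k : ℕ) (b : ℕ → ℂ) (z : ℂ) : ℂ :=
  ∑ f ∈ Finset.piAntidiag (Finset.range n) k,
    ∏ j ∈ Finset.range n, ((z - b j) ^ (f j + 1))⁻¹

lemma nu_eq_sum_piAntidiag (n k : ℕ) (b : ℕ → ℂ) (z : ℂ) :
    nu n k z b = ∑ f ∈ Finset.piAntidiag (Finset.range n) k,
      ∏ j ∈ Finset.range n, ((z - b j) ^ (f j))⁻¹ := by
  rw [nu, ← Finset.piAntidiag_univ_fin_eq_antidiagonalTuple k n]
  refine Finset.sum_nbij' (i := fun g j => if h : j < n then g ⟨j, h⟩ else 0)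
    (j := fun f (i : Fin n) => f i) ?_ ?_ ?_ ?_ ?_
  · intro g hg
    rw [Finset.mem_piAntidiag] at hg ⊢
    refine ⟨?_, ?_⟩
    · rw [← hg.1]
      rw [← Fin.sum_univ_eq_sum_range]
      exact Finset.sum_congr rfl fun i _ => by simp [i.isLt]
    · intro i hi
      by_contra hmem
      simp only [Finset.mem_range] at hmem
      simp [hmem] at hi
  · intro f hf
    rw [Finset.mem_piAntidiag] at hf ⊢
    exact ⟨by rw [← hf.1, Fin.sum_univ_eq_sum_range], fun i _ => Finset.mem_univ i⟩
  · intro g _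
    funext i
    simp [i.isLt]
  · intro f hf
    rw [Finset.mem_piAntidiag] at hf
    funext j
    by_cases h : j < n
    · simp [h]
    · simp only [h, dif_neg, not_false_iff]
      by_contra h0
      exact h (Finset.mem_range.1 (hf.2 j (Ne.symm h0)))
  · intro g _
    rw [← Fin.prod_univ_eq_prod_range]
    exact Finset.prod_congr rfl fun i _ => by simp [i.isLt]

lemma S_eq_nu_div_tau (n k : ℕ) (b : ℕ → ℂ) (z : ℂ) :
    S n k b z = nu n k z b / tau n z b := by
  rw [S, nu_eq_sum_piAntidiag, tau, div_eq_mul_inv, Finset.sum_mul]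
  refine Finset.sum_congr rfl fun f _ => ?_
  rw [← Finset.prod_inv_distrib, ← Finset.prod_mul_distrib]
  exact Finset.prod_congr rfl fun j _ => by rw [pow_succ, mul_inv]

/-- The key combinatorial identity. -/
lemma comb (n k : ℕ) (T : (ℕ → ℕ) → ℂ) :
    ∑ f ∈ Finset.piAntidiag (Finset.range n) k, ∑ i ∈ Finset.range n,
        ((f i + 1 : ℕ) : ℂ) * T (Function.update f i (f i + 1))
      = ((k + 1 : ℕ) : ℂ) * ∑ g ∈ Finset.piAntidiag (Finset.range n) (k + 1), T g := by
  have hR : ((k + 1 : ℕ) : ℂ) * ∑ g ∈ Finset.piAntidiag (Finset.range n) (k + 1), T g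
      = ∑ g ∈ Finset.piAntidiag (Finset.range n) (k + 1), ∑ i ∈ Finset.range n,
          ((g i : ℕ) : ℂ) * T g := by
    rw [Finset.mul_sum]
    refine Finset.sum_congr rfl fun g hg => ?_
    rw [← Finset.sum_mul]
    rw [Finset.mem_piAntidiag] at hg
    rw [← Nat.cast_sum, hg.1]
  rw [hR, ← Finset.sum_product', ← Finset.sum_product']
  have hfil : ∑ q ∈ Finset.piAntidiag (Finset.range n) (k + 1) ×ˢ Finset.range n,
        ((q.1 q.2 : ℕ) : ℂ) * T q.1
      = ∑ q ∈ (Finset.piAntidiag (Finset.range n) (k + 1) ×ˢ Finset.range n).filter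
          (fun q => q.1 q.2 ≠ 0), ((q.1 q.2 : ℕ) : ℂ) * T q.1 := by
    refine (Finset.sum_filter_of_ne fun q _ h => ?_).symm
    intro h0
    exact h (by simp [h0])
  rw [hfil]
  refine Finset.sum_nbij' (i := fun p => (Function.update p.1 p.2 (p.1 p.2 + 1), p.2))
    (j := fun q => (Function.update q.1 q.2 (q.1 q.2 - 1), q.2)) ?_ ?_ ?_ ?_ ?_
  · rintro ⟨f, i⟩ hp
    simp only [Finset.mem_product, Finset.mem_piAntidiag] at hp
    obtain ⟨⟨hsum, hsupp⟩, hi⟩ := hp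
    simp only [Finset.mem_filter, Finset.mem_product, Finset.mem_piAntidiag,
      Function.update_self]
    refine ⟨⟨⟨?_, ?_⟩, hi⟩, by simp⟩
    · rw [Finset.sum_update_of_mem hi]
      have h3 := Finset.add_sum_erase (Finset.range n) f hi
      simp only [Finset.erase_eq] at h3
      have hsum' : ∑ x ∈ Finset.range n, f x = k := hsum
      omega
    · intro j hj
      by_cases hji : j = i
      · exact hji ▸ hi
      · rw [Function.update_of_ne hji] at hj
        exact hsupp j hj
  · rintro ⟨g, i⟩ hq
    simp only [Finset.mem_filter, Finset.mem_product, Finset.mem_piAntidiag] at hq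
    obtain ⟨⟨⟨hsum, hsupp⟩, hi⟩, hne⟩ := hq
    simp only [Finset.mem_product, Finset.mem_piAntidiag]
    refine ⟨⟨?_, ?_⟩, hi⟩
    · rw [Finset.sum_update_of_mem hi]
      have h3 := Finset.add_sum_erase (Finset.range n) g hi
      simp only [Finset.erase_eq] at h3
      have hsum' : ∑ x ∈ Finset.range n, g x = k + 1 := hsum
      omega
    · intro j hj
      by_cases hji : j = i
      · exact hji ▸ hi
      · rw [Function.update_of_ne hji] at hj
        exact hsupp j hj
  · rintro ⟨f, i⟩ _
    simp only [Function.update_idem, Function.update_self, Nat.add_sub_cancel]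
    rw [Function.update_eq_self]
  · rintro ⟨g, i⟩ hq
    have hne := (Finset.mem_filter.1 hq).2
    simp only [Function.update_idem, Function.update_self]
    rw [Nat.sub_add_cancel (Nat.one_le_iff_ne_zero.2 hne), Function.update_eq_self]
  · rintro ⟨f, i⟩ _
    simp

lemma hasDerivAt_invpow (m : ℕ) (c z : ℂ) (h : z ≠ c) :
    HasDerivAt (fun w : ℂ => ((w - c) ^ m)⁻¹) (-(m : ℂ) * ((z - c) ^ (m + 1))⁻¹) z := by
  have h1 : HasDerivAt (fun w : ℂ => w - c) 1 z := by
    simpa using (hasDerivAt_id z).sub_const c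
  have h2 := (hasDerivAt_zpow (-(m : ℤ)) (z - c) (Or.inl (sub_ne_zero.2 h))).comp z h1
  have e1 : (fun w : ℂ => (w - c) ^ (-(m : ℤ))) = fun w : ℂ => ((w - c) ^ m)⁻¹ := by
    funext w; rw [zpow_neg, zpow_natCast]
  simp only [Function.comp_def] at h2
  rw [e1] at h2
  refine h2.congr_deriv ?_
  rw [mul_one]
  have : (-(m : ℤ) - 1) = -((m + 1 : ℕ) : ℤ) := by push_cast; ring
  rw [this, zpow_neg, zpow_natCast]
  push_cast
  ring

lemma S_hasDerivAt (n k : ℕ) (b : ℕ → ℂ) (z : ℂ) (hz : ∀ j < n, z ≠ b j) :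
    HasDerivAt (fun w => S n k b w) (-((k : ℂ) + 1) * S n (k + 1) b z) z := by
  have hterm : ∀ f : ℕ → ℕ,
      HasDerivAt (fun w => ∏ j ∈ Finset.range n, ((w - b j) ^ (f j + 1))⁻¹)
        (∑ i ∈ Finset.range n,
          (∏ j ∈ (Finset.range n).erase i, ((z - b j) ^ (f j + 1))⁻¹) •
            (-((f i + 1 : ℕ) : ℂ) * ((z - b i) ^ (f i + 1 + 1))⁻¹)) z := by
    intro f
    exact HasDerivAt.fun_finsetProd fun i hi =>
      hasDerivAt_invpow (f i + 1) (b i) z (hz i (Finset.mem_range.1 hi))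
  have hsum := HasDerivAt.fun_sum (u := Finset.piAntidiag (Finset.range n) k)
    (fun f _ => hterm f)
  refine hsum.congr_deriv ?_
  symm
  have key := comb n k (fun g => ∏ j ∈ Finset.range n, ((z - b j) ^ (g j + 1))⁻¹)
  have hfold : ∀ f : ℕ → ℕ, ∀ i ∈ Finset.range n,
      (∏ j ∈ (Finset.range n).erase i, ((z - b j) ^ (f j + 1))⁻¹) *
          ((z - b i) ^ (f i + 1 + 1))⁻¹
        = ∏ j ∈ Finset.range n, ((z - b j) ^ (Function.update f i (f i + 1) j + 1))⁻¹ := by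
    intro f i hi
    rw [← Finset.mul_prod_erase _ _ hi, Function.update_self, mul_comm]
    congr 1
    refine Finset.prod_congr rfl fun j hj => ?_
    rw [Function.update_of_ne (Finset.ne_of_mem_erase hj)]
  calc -((k : ℂ) + 1) * S n (k + 1) b z
      = -(((k + 1 : ℕ) : ℂ) * ∑ g ∈ Finset.piAntidiag (Finset.range n) (k + 1),
          ∏ j ∈ Finset.range n, ((z - b j) ^ (g j + 1))⁻¹) := by
        rw [S]; push_cast; ring
    _ = -(∑ f ∈ Finset.piAntidiag (Finset.range n) k, ∑ i ∈ Finset.range n,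
          ((f i + 1 : ℕ) : ℂ) *
            ∏ j ∈ Finset.range n, ((z - b j) ^ (Function.update f i (f i + 1) j + 1))⁻¹) := by
        rw [key]
    _ = _ := by
        rw [← Finset.sum_neg_distrib]
        refine Finset.sum_congr rfl fun f _ => ?_
        rw [← Finset.sum_neg_distrib]
        refine Finset.sum_congr rfl fun i hi => ?_
        rw [← hfold f i hi]
        simp only [smul_eq_mul]
        ring

lemma key_formula (n k : ℕ) (b : ℕ → ℂ) :
    ∀ z : ℂ, (∀ j < n, z ≠ b j) →
      iteratedDeriv k (fun w : ℂ => ∏ j ∈ Finset.range n, (w - b j)⁻¹) z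
        = (-1) ^ k * (k.factorial : ℂ) * S n k b z := by
  induction k with
  | zero =>
    intro z _
    simp only [iteratedDeriv_zero, pow_zero, Nat.factorial_zero, Nat.cast_one, one_mul]
    rw [S, Finset.piAntidiag_zero, Finset.sum_singleton]
    simp
  | succ k ih =>
    intro z hz
    rw [iteratedDeriv_succ]
    have hU : IsOpen {w : ℂ | ∀ j < n, w ≠ b j} := by
      have : {w : ℂ | ∀ j < n, w ≠ b j} = ⋂ j ∈ Finset.range n, ({b j}ᶜ : Set ℂ) := by
        ext w; simp [Set.mem_iInter]
      rw [this]
      exact isOpen_biInter_finset fun j _ => isOpen_compl_singleton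
    have heq : iteratedDeriv k (fun w : ℂ => ∏ j ∈ Finset.range n, (w - b j)⁻¹)
        =ᶠ[nhds z] fun w => (-1) ^ k * (k.factorial : ℂ) * S n k b w :=
      Filter.eventuallyEq_of_mem (hU.mem_nhds hz) fun w hw => ih w hw
    rw [heq.deriv_eq]
    have hd := ((S_hasDerivAt n k b z hz).const_mul ((-1) ^ k * (k.factorial : ℂ))).deriv
    rw [hd, Nat.factorial_succ]
    push_cast
    ring

/-- The k-th derivative of w ↦ ∏_{j=1}^n (w − b_j)^{−1} at z is (−1)^k k! ν_k(z,b)/τ_n(z,b). -/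
theorem stmt_8 (n : ℕ) (hn : 1 ≤ n) (k : ℕ) (b : ℕ → ℂ) (z : ℂ)
    (hz : ∀ j < n, z ≠ b j) :
    iteratedDeriv k (fun w : ℂ => ∏ j ∈ Finset.range n, (w - b j)⁻¹) z =
      (-1) ^ k * (k.factorial : ℂ) * nu n k z b / tau n z b := by
  rw [key_formula n k b z hz, S_eq_nu_div_tau, mul_div_assoc]
end

section
/- Let λ > 0, let n, s be positive integers, let a_1, …, a_n be complex numbers in the upper half-plane, and let D_0, …, D_s ∈ ℂ. Define, for t ∈ ℝ, W(t) := Σ_{l=0}^{s} D_l/(iλ − t)^{l+1} and Q(t) := (τ_n(t, a)/τ_n(t, ā)) · Σ_{l=0}^{s} conj(D_l)/(−iλ − t)^{l+1}. Then ∫_{-∞}^{∞} Q(t) · conj(W(t)) dt = 0 and ∫_{-∞}^{∞} W(t) · conj(Q(t)) dt = 0. -/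
open MeasureTheory Complex

set_option maxHeartbeats 2000000 in
/-- With W(t) := Σ_{l=0}^s D_l/(iλ − t)^{l+1} and
Q(t) := (τ_n(t,a)/τ_n(t,ā)) Σ_{l=0}^s conj(D_l)/(−iλ − t)^{l+1},
both cross integrals ∫ Q conj(W) dt and ∫ W conj(Q) dt vanish. -/
theorem stmt_12 (lam : ℝ) (hlam : 0 < lam) (n s : ℕ) (hn : 1 ≤ n) (hs : 1 ≤ s)
    (a : ℕ → ℂ) (ha : ∀ k < n, 0 < (a k).im) (D : ℕ → ℂ) :
    (∫ t : ℝ,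
        (tau n t a / tau n t (fun k => starRingEnd ℂ (a k)) *
            ∑ l ∈ Finset.range (s + 1), starRingEnd ℂ (D l) / (-(I * lam) - t) ^ (l + 1)) *
          starRingEnd ℂ (∑ l ∈ Finset.range (s + 1), D l / (I * lam - t) ^ (l + 1))) = 0 ∧
    (∫ t : ℝ,
        (∑ l ∈ Finset.range (s + 1), D l / (I * lam - t) ^ (l + 1)) *
          starRingEnd ℂ
            (tau n t a / tau n t (fun k => starRingEnd ℂ (a k)) *
              ∑ l ∈ Finset.range (s + 1),
                starRingEnd ℂ (D l) / (-(I * lam) - t) ^ (l + 1))) = 0 := by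
  classical
  -- the analytic continuation of the integrand of the first integral
  set S : ℂ → ℂ := fun z =>
    ∑ l ∈ Finset.range (s + 1), (starRingEnd ℂ) (D l) / (-(I * (lam : ℂ)) - z) ^ (l + 1)
    with hSdef
  set g : ℂ → ℂ := fun z =>
    (∏ k ∈ Finset.range n, (z - a k)) /
      (∏ k ∈ Finset.range n, (z - (starRingEnd ℂ) (a k))) * (S z * S z) with hgdef
  -- denominators do not vanish in the closed upper half plane
  have hw : ∀ z : ℂ, 0 ≤ z.im → (-(I * (lam : ℂ)) - z) ≠ 0 := by
    intro z hz h
    have h2 := congrArg Complex.im h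
    simp [Complex.sub_im, Complex.neg_im, Complex.mul_im] at h2
    linarith
  have hden : ∀ z : ℂ, 0 ≤ z.im → ∀ k, k < n → z - (starRingEnd ℂ) (a k) ≠ 0 := by
    intro z hz k hk h
    have h2 := congrArg Complex.im h
    simp [Complex.sub_im, Complex.conj_im, sub_neg_eq_add] at h2
    have := ha k hk
    linarith
  -- differentiability on the closed upper half plane
  have hSdiff : ∀ z : ℂ, 0 ≤ z.im → DifferentiableAt ℂ S z := by
    intro z hz
    apply DifferentiableAt.fun_sum
    intro l _
    exact (differentiableAt_const _).div
      (((differentiableAt_const _).sub differentiableAt_id).pow _)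
      (pow_ne_zero _ (hw z hz))
  have hgdiff : ∀ z : ℂ, 0 ≤ z.im → DifferentiableAt ℂ g z := by
    intro z hz
    have h1 : DifferentiableAt ℂ (fun z : ℂ => ∏ k ∈ Finset.range n, (z - a k)) z :=
      DifferentiableAt.fun_finsetProd fun k _ => differentiableAt_id.sub (differentiableAt_const _)
    have h2 : DifferentiableAt ℂ
        (fun z : ℂ => ∏ k ∈ Finset.range n, (z - (starRingEnd ℂ) (a k))) z :=
      DifferentiableAt.fun_finsetProd fun k _ => differentiableAt_id.sub (differentiableAt_const _)
    have h3 : (∏ k ∈ Finset.range n, (z - (starRingEnd ℂ) (a k))) ≠ 0 :=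
      Finset.prod_ne_zero_iff.mpr fun k hk => hden z hz k (Finset.mem_range.mp hk)
    exact ((h1.div h2 h3).mul ((hSdiff z hz).mul (hSdiff z hz)))
  -- Blaschke-type factor is bounded by 1 on the upper half plane
  have hfac : ∀ z : ℂ, 0 ≤ z.im → ∀ k, k < n →
      ‖z - a k‖ ≤ ‖z - (starRingEnd ℂ) (a k)‖ := by
    intro z hz k hk
    have him : 0 < (a k).im := ha k hk
    rw [Complex.norm_def, Complex.norm_def]
    apply Real.sqrt_le_sqrt
    rw [Complex.normSq_apply, Complex.normSq_apply]
    simp only [Complex.sub_re, Complex.sub_im, Complex.conj_re, Complex.conj_im]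
    nlinarith [mul_nonneg hz him.le]
  have hBla : ∀ z : ℂ, 0 ≤ z.im →
      ‖(∏ k ∈ Finset.range n, (z - a k)) /
        (∏ k ∈ Finset.range n, (z - (starRingEnd ℂ) (a k)))‖ ≤ 1 := by
    intro z hz
    rw [norm_div]
    apply div_le_one_of_le₀
    · rw [norm_prod, norm_prod]
      exact Finset.prod_le_prod (fun k _ => norm_nonneg _)
        (fun k hk => hfac z hz k (Finset.mem_range.mp hk))
    · exact norm_nonneg _
  -- bound on S
  set C1 : ℝ := ∑ l ∈ Finset.range (s + 1), ‖D l‖ with hC1def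
  have hC1 : 0 ≤ C1 := Finset.sum_nonneg fun _ _ => norm_nonneg _
  have hSbound : ∀ z : ℂ, 2 * lam + 2 ≤ ‖z‖ → ‖S z‖ ≤ 2 * C1 / ‖z‖ := by
    intro z hzR
    have hz0 : (0 : ℝ) < ‖z‖ := by linarith
    set w : ℂ := -(I * (lam : ℂ)) - z with hwdef
    have hIlam : ‖-(I * (lam : ℂ))‖ = lam := by
      rw [norm_neg, norm_mul, Complex.norm_I, one_mul, Complex.norm_real,
        Real.norm_eq_abs, abs_of_pos hlam]
    have hw1 : ‖z‖ - lam ≤ ‖w‖ := by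
      have h := norm_sub_norm_le z (-(I * (lam : ℂ)))
      have h2 : ‖z - -(I * (lam : ℂ))‖ = ‖w‖ := by
        rw [show z - -(I * (lam : ℂ)) = -w by rw [hwdef]; ring, norm_neg]
      rw [h2, hIlam] at h
      exact h
    have hwhalf : ‖z‖ / 2 ≤ ‖w‖ := by linarith
    have hwge1 : 1 ≤ ‖w‖ := by linarith
    calc ‖S z‖ ≤ ∑ l ∈ Finset.range (s + 1), ‖(starRingEnd ℂ) (D l) / w ^ (l + 1)‖ :=
          norm_sum_le _ _
      _ ≤ ∑ l ∈ Finset.range (s + 1), 2 * ‖D l‖ / ‖z‖ := by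
          apply Finset.sum_le_sum
          intro l _
          rw [norm_div, norm_pow, RCLike.norm_conj]
          have hpow : ‖z‖ / 2 ≤ ‖w‖ ^ (l + 1) :=
            le_trans hwhalf (le_self_pow₀ hwge1 (Nat.succ_ne_zero l))
          calc ‖D l‖ / ‖w‖ ^ (l + 1) ≤ ‖D l‖ / (‖z‖ / 2) := by
                gcongr
            _ = 2 * ‖D l‖ / ‖z‖ := by
                rw [div_div_eq_mul_div]
                ring
      _ = 2 * C1 / ‖z‖ := by
          rw [hC1def, Finset.mul_sum, Finset.sum_div]
  set C : ℝ := (2 * C1) ^ 2 with hCdef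
  have hC : 0 ≤ C := by positivity
  have hgbound : ∀ z : ℂ, 0 ≤ z.im → 2 * lam + 2 ≤ ‖z‖ → ‖g z‖ ≤ C / ‖z‖ ^ 2 := by
    intro z hz hzR
    have hz0 : (0 : ℝ) < ‖z‖ := by linarith
    have h1 := hBla z hz
    have h2 := hSbound z hzR
    have h3 : (0 : ℝ) ≤ 2 * C1 / ‖z‖ := by positivity
    calc ‖g z‖ = ‖(∏ k ∈ Finset.range n, (z - a k)) /
          (∏ k ∈ Finset.range n, (z - (starRingEnd ℂ) (a k)))‖ * (‖S z‖ * ‖S z‖) := by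
          rw [hgdef]; rw [norm_mul, norm_mul]
      _ ≤ 1 * (2 * C1 / ‖z‖ * (2 * C1 / ‖z‖)) := by
          apply mul_le_mul h1 _ (mul_nonneg (norm_nonneg _) (norm_nonneg _)) zero_le_one
          exact mul_le_mul h2 h2 (norm_nonneg _) h3
      _ = C / ‖z‖ ^ 2 := by
          rw [hCdef, one_mul, div_mul_div_comm, ← pow_two, ← pow_two]
  -- continuity and integrability on the real line
  have him0 : ∀ t : ℝ, ((t : ℂ)).im = 0 := fun t => Complex.ofReal_im t
  have hcont : Continuous fun t : ℝ => g (t : ℂ) := by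
    rw [continuous_iff_continuousAt]
    intro t
    exact (hgdiff (t : ℂ) (by simp)).continuousAt.comp Complex.continuous_ofReal.continuousAt
  obtain ⟨M, hM⟩ := IsCompact.exists_bound_of_continuousOn
    (isCompact_Icc (a := -(2 * lam + 2)) (b := 2 * lam + 2)) hcont.continuousOn
  set K : ℝ := max (max M 0 * (1 + (2 * lam + 2) ^ 2)) (2 * C) with hKdef
  have hKb : ∀ t : ℝ, ‖g (t : ℂ)‖ ≤ K * (1 + t ^ 2)⁻¹ := by
    intro t
    have ht1 : (0 : ℝ) < 1 + t ^ 2 := by positivity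
    have hmain : ‖g (t : ℂ)‖ * (1 + t ^ 2) ≤ K := by
      rcases le_or_gt |t| (2 * lam + 2) with h | h
      · have hMt : ‖g (t : ℂ)‖ ≤ M := hM t (Set.mem_Icc.mpr (abs_le.mp h))
        have ht2 : t ^ 2 ≤ (2 * lam + 2) ^ 2 := by
          nlinarith [_root_.sq_abs t, abs_nonneg t, abs_le.mp h]
        have hKge : max M 0 * (1 + (2 * lam + 2) ^ 2) ≤ K := le_max_left _ _
        nlinarith [norm_nonneg (g (t : ℂ)), le_max_left M 0, le_max_right M 0]
      · have hnt : 2 * lam + 2 ≤ ‖(t : ℂ)‖ := by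
          rw [Complex.norm_real, Real.norm_eq_abs]; exact h.le
        have hb := hgbound (t : ℂ) (by simp) hnt
        rw [Complex.norm_real, Real.norm_eq_abs, _root_.sq_abs] at hb
        have ht2 : (1 : ℝ) ≤ t ^ 2 := by nlinarith [_root_.sq_abs t, abs_nonneg t]
        have h1 : (0 : ℝ) < t ^ 2 := by linarith
        have h2 : ‖g (t : ℂ)‖ * t ^ 2 ≤ C := (le_div_iff₀ h1).mp hb
        have hKge : 2 * C ≤ K := le_max_right _ _
        nlinarith [norm_nonneg (g (t : ℂ))]
    rw [← div_eq_mul_inv, le_div_iff₀ ht1]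
    exact hmain
  have hint : Integrable fun t : ℝ => g (t : ℂ) := by
    apply Integrable.mono' ((integrable_inv_one_add_sq).const_mul K)
      hcont.aestronglyMeasurable
    exact Filter.Eventually.of_forall hKb
  -- the contour estimate
  have key : ∀ R : ℝ, 2 * lam + 2 ≤ R → ‖∫ x in (-R)..R, g (x : ℂ)‖ ≤ 4 * C / R := by
    intro R hR
    have hR0 : (0 : ℝ) < R := by linarith
    have hdiffOn : DifferentiableOn ℂ g
        (Set.uIcc ((-R : ℂ)).re ((R : ℂ) + R * I).re ×ℂ
          Set.uIcc ((-R : ℂ)).im ((R : ℂ) + R * I).im) := by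
      intro z hz
      apply (hgdiff z _).differentiableWithinAt
      have h2 := hz.2
      simp only [Complex.neg_im, Complex.ofReal_im, neg_zero, Complex.add_im, Complex.mul_im,
        Complex.I_re, Complex.I_im, Complex.ofReal_re, mul_zero, mul_one, zero_add, zero_mul, add_zero] at h2
      rw [Set.uIcc_of_le (by linarith : (0:ℝ) ≤ R)] at h2
      exact h2.1
    have hrect := Complex.integral_boundary_rect_eq_zero_of_differentiableOn g (-R : ℂ)
      ((R : ℂ) + R * I) hdiffOn
    simp only [Complex.neg_re, Complex.neg_im, Complex.ofReal_re, Complex.ofReal_im,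
      Complex.add_re, Complex.add_im, Complex.mul_re, Complex.mul_im, Complex.I_re, Complex.I_im,
      mul_zero, mul_one, zero_mul, sub_zero, zero_add, zero_sub, neg_zero, add_zero,
      Complex.ofReal_zero, add_zero, Complex.ofReal_neg] at hrect
    -- hrect : ∫ x in -R..R, g x - ∫ x in -R..R, g (x + R*I)
    --   + I • ∫ y in 0..R, g (R + y*I) - I • ∫ y in 0..R, g (-R + y*I) = 0
    have hbot : (∫ x in (-R)..R, g (x : ℂ)) =
        (∫ x in (-R)..R, g ((x : ℂ) + (R : ℂ) * I)) -
          I • (∫ y in (0:ℝ)..R, g ((R : ℂ) + (y : ℂ) * I)) +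
          I • (∫ y in (0:ℝ)..R, g ((-R : ℂ) + (y : ℂ) * I)) := by
      linear_combination hrect
    have hnormz : ∀ x : ℝ, 2 * lam + 2 ≤ ‖(x : ℂ) + (R : ℂ) * I‖ := by
      intro x
      refine le_trans hR (le_trans ?_ (Complex.abs_im_le_norm _))
      simp [_root_.abs_of_pos hR0]
    have htop : ‖∫ x in (-R)..R, g ((x : ℂ) + (R : ℂ) * I)‖ ≤ C / R ^ 2 * (2 * R) := by
      have := intervalIntegral.norm_integral_le_of_norm_le_const
        (C := C / R ^ 2) (f := fun x : ℝ => g ((x : ℂ) + (R : ℂ) * I)) (a := -R) (b := R) ?_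
      · refine le_trans this ?_
        rw [_root_.abs_of_nonneg (by linarith : (0:ℝ) ≤ R - -R)]
        apply le_of_eq
        ring
      · intro x _
        have him : ((x : ℂ) + (R : ℂ) * I).im = R := by simp
        have hb := hgbound _ (by rw [him]; linarith) (hnormz x)
        refine le_trans hb ?_
        gcongr
        refine le_trans ?_ (Complex.abs_im_le_norm _)
        rw [him]
        exact le_abs_self R
    have hside : ∀ σ : ℝ, |σ| = R →
        ‖∫ y in (0:ℝ)..R, g ((σ : ℂ) + (y : ℂ) * I)‖ ≤ C / R ^ 2 * R := by
      intro σ hσ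
      have := intervalIntegral.norm_integral_le_of_norm_le_const
        (C := C / R ^ 2) (f := fun y : ℝ => g ((σ : ℂ) + (y : ℂ) * I)) (a := 0) (b := R) ?_
      · refine le_trans this ?_
        rw [_root_.abs_of_nonneg (by linarith : (0:ℝ) ≤ R - 0)]
        apply le_of_eq; ring
      · intro y hy
        rw [Set.uIoc_of_le hR0.le] at hy
        have him : ((σ : ℂ) + (y : ℂ) * I).im = y := by simp
        have hre : ((σ : ℂ) + (y : ℂ) * I).re = σ := by simp
        have hnz : 2 * lam + 2 ≤ ‖(σ : ℂ) + (y : ℂ) * I‖ := by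
          refine le_trans hR (le_trans ?_ (Complex.abs_re_le_norm _))
          rw [hre, hσ]
        have hb := hgbound _ (by rw [him]; exact hy.1.le) hnz
        refine le_trans hb ?_
        gcongr
        all_goals refine le_trans ?_ (Complex.abs_re_le_norm _)
        all_goals rw [hre, ← hσ]
        all_goals exact le_abs_self σ
    have hI : ∀ v : ℂ, ‖I • v‖ = ‖v‖ := by
      intro v
      rw [smul_eq_mul, norm_mul, Complex.norm_I, one_mul]
    rw [hbot]
    have h1 := htop
    have h2 := hside R (_root_.abs_of_pos hR0)
    have h3 := hside (-R) (by rw [abs_neg, _root_.abs_of_pos hR0])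
    simp only [Complex.ofReal_neg] at h3
    calc ‖(∫ x in (-R)..R, g ((x : ℂ) + (R : ℂ) * I)) -
          I • (∫ y in (0:ℝ)..R, g ((R : ℂ) + (y : ℂ) * I)) +
          I • (∫ y in (0:ℝ)..R, g ((-R : ℂ) + (y : ℂ) * I))‖
        ≤ ‖(∫ x in (-R)..R, g ((x : ℂ) + (R : ℂ) * I)) -
          I • (∫ y in (0:ℝ)..R, g ((R : ℂ) + (y : ℂ) * I))‖ +
          ‖I • (∫ y in (0:ℝ)..R, g ((-R : ℂ) + (y : ℂ) * I))‖ := norm_add_le _ _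
      _ ≤ ‖∫ x in (-R)..R, g ((x : ℂ) + (R : ℂ) * I)‖ +
          ‖I • (∫ y in (0:ℝ)..R, g ((R : ℂ) + (y : ℂ) * I))‖ +
          ‖I • (∫ y in (0:ℝ)..R, g ((-R : ℂ) + (y : ℂ) * I))‖ := by
          gcongr
          exact norm_sub_le _ _
      _ ≤ C / R ^ 2 * (2 * R) + C / R ^ 2 * R + C / R ^ 2 * R := by
          rw [hI, hI]
          exact add_le_add (add_le_add h1 h2) h3
      _ = 4 * C / R := by field_simp; ring
  -- conclude ∫ g = 0
  have hlim1 : Filter.Tendsto (fun R : ℝ => ∫ x in (-R)..R, g (x : ℂ)) Filter.atTop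
      (nhds (∫ t : ℝ, g (t : ℂ))) :=
    intervalIntegral_tendsto_integral hint Filter.tendsto_neg_atTop_atBot Filter.tendsto_id
  have hlim2 : Filter.Tendsto (fun R : ℝ => ∫ x in (-R)..R, g (x : ℂ)) Filter.atTop (nhds 0) := by
    apply squeeze_zero_norm' (a := fun R : ℝ => 4 * C / R)
    · filter_upwards [Filter.eventually_ge_atTop (2 * lam + 2)] with R hR
      exact key R hR
    · exact Filter.Tendsto.div_atTop tendsto_const_nhds Filter.tendsto_id
  have hg0 : (∫ t : ℝ, g (t : ℂ)) = 0 := tendsto_nhds_unique hlim1 hlim2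
  -- identify integrands
  have hconjW : ∀ t : ℝ,
      (starRingEnd ℂ) (∑ l ∈ Finset.range (s + 1), D l / (I * lam - t) ^ (l + 1)) = S t := by
    intro t
    rw [hSdef, map_sum]
    refine Finset.sum_congr rfl fun l _ => ?_
    rw [map_div₀, map_pow]
    congr 2
    simp [map_sub, map_mul, Complex.conj_I, Complex.conj_ofReal]
  have heq1 : ∀ t : ℝ,
      ((tau n t a / tau n t (fun k => starRingEnd ℂ (a k)) *
          ∑ l ∈ Finset.range (s + 1), starRingEnd ℂ (D l) / (-(I * lam) - t) ^ (l + 1)) *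
        starRingEnd ℂ (∑ l ∈ Finset.range (s + 1), D l / (I * lam - t) ^ (l + 1))) = g t := by
    intro t
    rw [hconjW t, hgdef]
    show _ = _ / _ * (S t * S t)
    rw [← mul_assoc]
    rfl
  have hfirst : (∫ t : ℝ,
      (tau n t a / tau n t (fun k => starRingEnd ℂ (a k)) *
          ∑ l ∈ Finset.range (s + 1), starRingEnd ℂ (D l) / (-(I * lam) - t) ^ (l + 1)) *
        starRingEnd ℂ (∑ l ∈ Finset.range (s + 1), D l / (I * lam - t) ^ (l + 1))) = 0 := by
    rw [MeasureTheory.integral_congr_ae (Filter.Eventually.of_forall heq1)]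
    exact hg0
  refine ⟨hfirst, ?_⟩
  have heq2 : ∀ t : ℝ,
      ((∑ l ∈ Finset.range (s + 1), D l / (I * lam - t) ^ (l + 1)) *
        starRingEnd ℂ
          (tau n t a / tau n t (fun k => starRingEnd ℂ (a k)) *
            ∑ l ∈ Finset.range (s + 1), starRingEnd ℂ (D l) / (-(I * lam) - t) ^ (l + 1))) =
      (starRingEnd ℂ)
        ((tau n t a / tau n t (fun k => starRingEnd ℂ (a k)) *
            ∑ l ∈ Finset.range (s + 1), starRingEnd ℂ (D l) / (-(I * lam) - t) ^ (l + 1)) *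
          starRingEnd ℂ (∑ l ∈ Finset.range (s + 1), D l / (I * lam - t) ^ (l + 1))) := by
    intro t
    simp only [tau, map_mul, map_div₀, map_sum, map_pow, map_sub, map_prod, map_neg,
      Complex.conj_conj, Complex.conj_I, Complex.conj_ofReal, neg_mul, neg_neg]
    ring
  rw [MeasureTheory.integral_congr_ae (Filter.Eventually.of_forall heq2), integral_conj, hfirst,
    map_zero]
end

section
/- Let λ > 0, let n, s be positive integers, let a_1, …, a_n be complex numbers in the upper half-plane, and let D_0, …, D_s ∈ ℂ. Define, for t ∈ ℝ, W(t) := Σ_{l=0}^{s} D_l/(iλ − t)^{l+1} and Q(t) := (τ_n(t, a)/τ_n(t, ā)) · Σ_{l=0}^{s} conj(D_l)/(−iλ − t)^{l+1}. Then ∫_{-∞}^{∞} |W(t) + Q(t)|² dt = 2 ∫_{-∞}^{∞} |W(t)|² dt. -/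
open MeasureTheory Complex

namespace Stmt13Aux

/-- W as a function of a complex variable. -/
noncomputable def Wf (lam : ℝ) (s : ℕ) (D : ℕ → ℂ) (z : ℂ) : ℂ :=
  ∑ l ∈ Finset.range (s + 1), D l / (I * lam - z) ^ (l + 1)

/-- The auxiliary function F(z) = (τ(z,ā)/τ(z,a)) W(z)², holomorphic in the closed
lower half plane. -/
noncomputable def Ff (lam : ℝ) (n s : ℕ) (a D : ℕ → ℂ) (z : ℂ) : ℂ :=
  (tau n z (fun k => starRingEnd ℂ (a k)) / tau n z a) * (Wf lam s D z) ^ 2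

variable {lam : ℝ} {n s : ℕ} {a D : ℕ → ℂ}

lemma tau_ne_zero (ha : ∀ k < n, 0 < (a k).im) {z : ℂ} (hz : z.im ≤ 0) :
    tau n z a ≠ 0 := by
  unfold tau
  rw [Finset.prod_ne_zero_iff]
  intro k hk
  rw [sub_ne_zero]
  intro h
  have := ha k (Finset.mem_range.mp hk)
  rw [← h] at this
  linarith

lemma denom_ne_zero (hlam : 0 < lam) {z : ℂ} (hz : z.im ≤ 0) :
    I * (lam : ℂ) - z ≠ 0 := by
  intro h
  have := congrArg Complex.im h
  simp at this
  linarith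

lemma tau_differentiable (b : ℕ → ℂ) : Differentiable ℂ fun z => tau n z b := by
  intro z
  exact DifferentiableAt.fun_finsetProd fun i _ =>
    (differentiableAt_id.sub (differentiableAt_const _))

lemma Wf_differentiableAt (hlam : 0 < lam) {z : ℂ} (hz : z.im ≤ 0) :
    DifferentiableAt ℂ (Wf lam s D) z := by
  apply DifferentiableAt.fun_sum
  intro l _
  exact (differentiableAt_const _).div
    (((differentiableAt_const _).sub differentiableAt_id).pow _)
    (pow_ne_zero _ (denom_ne_zero hlam hz))

lemma Ff_differentiableAt (hlam : 0 < lam) (ha : ∀ k < n, 0 < (a k).im)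
    {z : ℂ} (hz : z.im ≤ 0) : DifferentiableAt ℂ (Ff lam n s a D) z := by
  exact (((tau_differentiable _ z).div (tau_differentiable a z)
    (tau_ne_zero ha hz))).mul ((Wf_differentiableAt hlam hz).pow 2)

/-- The bound constant for the coefficients. -/
noncomputable def Sc (s : ℕ) (D : ℕ → ℂ) : ℝ := ∑ l ∈ Finset.range (s + 1), ‖D l‖

/-- A radius beyond which all estimates hold. -/
noncomputable def Mb (lam : ℝ) (n : ℕ) (a : ℕ → ℂ) : ℝ :=
  1 + lam + ∑ k ∈ Finset.range n, ‖a k‖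

lemma one_le_Mb (hlam : 0 < lam) : 1 ≤ Mb lam n a := by
  have : (0:ℝ) ≤ ∑ k ∈ Finset.range n, ‖a k‖ :=
    Finset.sum_nonneg fun k _ => (norm_nonneg _)
  unfold Mb; linarith

lemma lam_le_Mb (hlam : 0 < lam) : lam ≤ Mb lam n a := by
  have : (0:ℝ) ≤ ∑ k ∈ Finset.range n, ‖a k‖ :=
    Finset.sum_nonneg fun k _ => (norm_nonneg _)
  unfold Mb; linarith

lemma abs_a_le_Mb (hlam : 0 < lam) {k : ℕ} (hk : k < n) : ‖a k‖ ≤ Mb lam n a := by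
  have h1 : ‖a k‖ ≤ ∑ j ∈ Finset.range n, ‖a j‖ :=
    Finset.single_le_sum (fun j _ => norm_nonneg (a j)) (Finset.mem_range.mpr hk)
  unfold Mb; linarith

lemma Sc_nonneg : 0 ≤ Sc s D := Finset.sum_nonneg fun l _ => norm_nonneg _

lemma Wf_bound (hlam : 0 < lam) {M : ℝ} (hM1 : 1 ≤ M) (hMlam : lam ≤ M) {z : ℂ}
    (hz3 : 3 * M ≤ ‖z‖) :
    ‖Wf lam s D z‖ ≤ (3 / 2) * Sc s D / ‖z‖ := by
  have hz0 : 3 ≤ ‖z‖ := by linarith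
  have hzpos : 0 < ‖z‖ := by linarith
  have hden : (2/3) * ‖z‖ ≤ ‖I * (lam:ℂ) - z‖ := by
    have h1 : ‖I * (lam:ℂ)‖ = lam := by
      rw [norm_mul, Complex.norm_I, Complex.norm_real, Real.norm_eq_abs, one_mul, abs_of_pos hlam]
    have h2 : ‖z‖ - ‖I * (lam:ℂ)‖ ≤ ‖I * (lam:ℂ) - z‖ := by
      have := norm_sub_norm_le z (I * (lam:ℂ))
      rw [norm_sub_rev z] at this
      linarith
    have : M ≤ ‖z‖ / 3 := by linarith
    rw [h1] at h2
    linarith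
  have hone : 1 ≤ ‖I * (lam:ℂ) - z‖ := by
    have : (2:ℝ) ≤ (2/3) * ‖z‖ := by linarith
    linarith
  have hterm : ∀ l ∈ Finset.range (s + 1),
      ‖D l / (I * (lam:ℂ) - z) ^ (l + 1)‖ ≤
        ‖D l‖ / ((2/3) * ‖z‖) := by
    intro l _
    rw [norm_div, norm_pow]
    have hpow : (2/3) * ‖z‖ ≤ ‖I * (lam:ℂ) - z‖ ^ (l + 1) := by
      calc (2/3) * ‖z‖ ≤ ‖I * (lam:ℂ) - z‖ := hden
        _ ≤ ‖I * (lam:ℂ) - z‖ ^ (l + 1) := le_self_pow₀ hone (Nat.succ_ne_zero l)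
    have h23 : (0:ℝ) < (2/3) * ‖z‖ := by positivity
    exact div_le_div_of_nonneg_left (norm_nonneg _) h23 hpow
  calc ‖Wf lam s D z‖
      ≤ ∑ l ∈ Finset.range (s + 1), ‖D l / (I * (lam:ℂ) - z) ^ (l + 1)‖ :=
        norm_sum_le _ _
    _ ≤ ∑ l ∈ Finset.range (s + 1), ‖D l‖ / ((2/3) * ‖z‖) :=
        Finset.sum_le_sum hterm
    _ = Sc s D / ((2/3) * ‖z‖) := by rw [← Finset.sum_div]; rfl
    _ = (3 / 2) * Sc s D / ‖z‖ := by field_simp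

lemma ratio_bound (hlam : 0 < lam) (ha : ∀ k < n, 0 < (a k).im) {z : ℂ}
    (hz3 : 3 * Mb lam n a ≤ ‖z‖) (hz : z.im ≤ 0) :
    ‖tau n z (fun k => starRingEnd ℂ (a k)) / tau n z a‖ ≤ 2 ^ n := by
  have hM1 : 1 ≤ Mb lam n a := one_le_Mb hlam
  have hzpos : 0 < ‖z‖ := by linarith
  rw [norm_div]
  have hfac : ∀ k ∈ Finset.range n,
      ‖z - starRingEnd ℂ (a k)‖ ≤ 2 * ‖z - a k‖ := by
    intro k hk
    have hk' := Finset.mem_range.mp hk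
    have haM : ‖a k‖ ≤ Mb lam n a := abs_a_le_Mb hlam hk'
    have h1 : ‖z - starRingEnd ℂ (a k)‖ ≤ ‖z‖ + ‖a k‖ := by
      have := norm_sub_le z (starRingEnd ℂ (a k))
      simpa [Complex.norm_conj] using this
    have h2 : ‖z‖ - ‖a k‖ ≤ ‖z - a k‖ := by
      have := norm_sub_norm_le z (a k)
      simpa using this
    have hM3 : Mb lam n a ≤ ‖z‖ / 3 := by linarith
    calc ‖z - starRingEnd ℂ (a k)‖ ≤ ‖z‖ + ‖a k‖ := h1
      _ ≤ (4/3) * ‖z‖ := by linarith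
      _ ≤ 2 * (‖z‖ - ‖a k‖) := by linarith
      _ ≤ 2 * ‖z - a k‖ := by linarith
  have habsnum : ‖tau n z (fun k => starRingEnd ℂ (a k))‖ ≤
      2 ^ n * ‖tau n z a‖ := by
    unfold tau
    rw [norm_prod, norm_prod]
    calc ∏ k ∈ Finset.range n, ‖z - starRingEnd ℂ (a k)‖
        ≤ ∏ k ∈ Finset.range n, (2 * ‖z - a k‖) := by
          apply Finset.prod_le_prod (fun k _ => norm_nonneg _) hfac
      _ = 2 ^ n * ∏ k ∈ Finset.range n, ‖z - a k‖ := by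
          rw [Finset.prod_mul_distrib, Finset.prod_const, Finset.card_range]
  have htau : 0 < ‖tau n z a‖ :=
    norm_pos_iff.mpr (tau_ne_zero ha hz)
  rw [div_le_iff₀ htau]
  linarith

/-- The global constant in the decay bound for F. -/
noncomputable def Cc (n s : ℕ) (D : ℕ → ℂ) : ℝ := 2 ^ n * (3 * Sc s D ^ 2)

lemma Cc_nonneg : 0 ≤ Cc n s D := by
  have := Sc_nonneg (s := s) (D := D); unfold Cc; positivity

lemma Ff_bound (hlam : 0 < lam) (ha : ∀ k < n, 0 < (a k).im) {z : ℂ}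
    (hz3 : 3 * Mb lam n a ≤ ‖z‖) (hz : z.im ≤ 0) :
    ‖Ff lam n s a D z‖ ≤ Cc n s D / ‖z‖ ^ 2 := by
  have hM1 : 1 ≤ Mb lam n a := one_le_Mb hlam
  have hzpos : 0 < ‖z‖ := by linarith
  have hW := Wf_bound (s := s) (D := D) hlam hM1 (lam_le_Mb hlam) hz3
  have hR := ratio_bound hlam ha hz3 hz
  have hWnn := norm_nonneg (Wf lam s D z)
  have hS := Sc_nonneg (s := s) (D := D)
  unfold Ff
  rw [norm_mul, norm_pow]
  calc ‖tau n z (fun k => starRingEnd ℂ (a k)) / tau n z a‖ *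
        ‖Wf lam s D z‖ ^ 2
      ≤ 2 ^ n * ((3/2) * Sc s D / ‖z‖) ^ 2 := by
        apply mul_le_mul hR _ (by positivity) (by positivity)
        exact pow_le_pow_left₀ hWnn hW 2
    _ = 2 ^ n * ((9/4) * Sc s D ^ 2) / ‖z‖ ^ 2 := by
        field_simp; ring
    _ ≤ Cc n s D / ‖z‖ ^ 2 := by
        apply div_le_div_of_nonneg_right _ (by positivity)
        unfold Cc
        nlinarith [Sc_nonneg (s := s) (D := D), pow_pos (show (0:ℝ) < 2 by norm_num) n]


lemma integrable_of_decay {E : Type*} [NormedAddCommGroup E] {g : ℝ → E} (hc : Continuous g)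
    (C R₀ : ℝ) (hR₀ : 1 ≤ R₀) (hb : ∀ t : ℝ, R₀ ≤ |t| → ‖g t‖ ≤ C / t ^ 2) :
    Integrable g := by
  obtain ⟨K, hK⟩ := (isCompact_Icc : IsCompact (Set.Icc (-R₀) R₀)).exists_bound_of_continuousOn
    hc.continuousOn
  have hK0 : 0 ≤ K := (norm_nonneg (g 0)).trans (hK 0 ⟨by linarith, by linarith⟩)
  have hC : 0 ≤ C := by
    have h1 := hb R₀ (by rw [abs_of_pos (by linarith)])
    have h2 := (norm_nonneg (g R₀)).trans h1
    by_contra hneg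
    push_neg at hneg
    have : C / R₀ ^ 2 < 0 := div_neg_of_neg_of_pos hneg (by positivity)
    linarith
  set C₂ := max (K * (1 + R₀ ^ 2)) (2 * C) with hC₂
  apply Integrable.mono' ((integrable_inv_one_add_sq).const_mul C₂) hc.aestronglyMeasurable
  filter_upwards with t
  have ht2 : (0:ℝ) < 1 + t ^ 2 := by positivity
  rcases le_or_gt |t| R₀ with h | h
  · have hgt : ‖g t‖ ≤ K := hK t (abs_le.mp h)
    have htR : t ^ 2 ≤ R₀ ^ 2 := by
      nlinarith [abs_le.mp h, abs_nonneg t, _root_.sq_abs t]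
    have : K * (1 + t ^ 2) ≤ C₂ := by
      calc K * (1 + t ^ 2) ≤ K * (1 + R₀ ^ 2) := by nlinarith
        _ ≤ C₂ := le_max_left _ _
    calc ‖g t‖ ≤ K := hgt
      _ ≤ C₂ * (1 + t ^ 2)⁻¹ := by
          rw [← div_eq_mul_inv, le_div_iff₀ ht2]; linarith
  · have h1 : ‖g t‖ ≤ C / t ^ 2 := hb t h.le
    have ht1 : 1 ≤ t ^ 2 := by nlinarith [_root_.sq_abs t, abs_nonneg t]
    have ht0 : (0:ℝ) < t ^ 2 := by linarith
    calc ‖g t‖ ≤ C / t ^ 2 := h1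
      _ ≤ 2 * C / (1 + t ^ 2) := by
          rw [div_le_div_iff₀ ht0 ht2]; nlinarith
      _ ≤ C₂ * (1 + t ^ 2)⁻¹ := by
          rw [← div_eq_mul_inv]
          exact div_le_div_of_nonneg_right (le_max_right _ _) ht2.le

lemma Ff_real_continuous (hlam : 0 < lam) (ha : ∀ k < n, 0 < (a k).im) :
    Continuous fun t : ℝ => Ff lam n s a D ↑t :=
  continuous_iff_continuousAt.mpr fun t =>
    ((Ff_differentiableAt hlam ha (by simp : ((t:ℂ)).im ≤ 0)).continuousAt).comp
      Complex.continuous_ofReal.continuousAt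

lemma Ff_real_integrable (hlam : 0 < lam) (ha : ∀ k < n, 0 < (a k).im) :
    Integrable fun t : ℝ => Ff lam n s a D ↑t := by
  have hM1 : 1 ≤ Mb lam n a := one_le_Mb hlam
  apply integrable_of_decay (Ff_real_continuous hlam ha) (Cc n s D) (3 * Mb lam n a)
    (by linarith)
  intro t ht
  have h1 : 3 * Mb lam n a ≤ ‖(t : ℂ)‖ := by rwa [Complex.norm_real, Real.norm_eq_abs]
  have := Ff_bound (s := s) (D := D) hlam ha h1 (by simp : ((t:ℂ)).im ≤ 0)
  calc ‖Ff lam n s a D ↑t‖ ≤ Cc n s D / ‖(t:ℂ)‖ ^ 2 := this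
    _ = Cc n s D / t ^ 2 := by rw [Complex.norm_real, Real.norm_eq_abs, _root_.sq_abs]

lemma integral_Ff_eq_zero (hlam : 0 < lam) (ha : ∀ k < n, 0 < (a k).im) :
    (∫ t : ℝ, Ff lam n s a D ↑t) = 0 := by
  have hM1 : 1 ≤ Mb lam n a := one_le_Mb hlam
  set R₀ := 3 * Mb lam n a with hR₀
  set F := Ff lam n s a D with hF
  set C := Cc n s D with hCdef
  have hC0 : 0 ≤ C := Cc_nonneg
  -- rectangle estimate
  have key : ∀ R : ℝ, R₀ ≤ R → ‖∫ t in (-R)..R, F ↑t‖ ≤ 4 * C / R := by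
    intro R hR
    have hRpos : (0:ℝ) < R := by linarith
    have hdiff : DifferentiableOn ℂ F (Set.uIcc (-R) R ×ℂ Set.uIcc (-R) 0) := by
      intro z hz
      have hz2 := (Complex.mem_reProdIm.mp hz).2
      rw [Set.uIcc_of_le (by linarith : -R ≤ (0:ℝ))] at hz2
      exact (Ff_differentiableAt hlam ha hz2.2).differentiableWithinAt
    have hrect := Complex.integral_boundary_rect_eq_zero_of_differentiableOn F
      ⟨-R, -R⟩ ⟨R, 0⟩ (by simpa using hdiff)
    simp only [Complex.ofReal_zero, zero_mul, add_zero] at hrect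
    -- bound for points on the contour with |z| ≥ R
    have hbound : ∀ w : ℂ, w.im ≤ 0 → R ≤ ‖w‖ → ‖F w‖ ≤ C / R ^ 2 := by
      intro w hw hwR
      have h1 : R₀ ≤ ‖w‖ := le_trans hR hwR
      have h2 := Ff_bound (s := s) (D := D) hlam ha h1 hw
      calc ‖F w‖ ≤ C / ‖w‖ ^ 2 := h2
        _ ≤ C / R ^ 2 := by
            apply div_le_div_of_nonneg_left hC0 (by positivity)
            exact pow_le_pow_left₀ hRpos.le hwR 2
    have hbot : ‖∫ x : ℝ in (-R)..R, F (↑x + ↑(-R : ℝ) * I)‖ ≤ C / R ^ 2 * (2 * R) := by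
      have := intervalIntegral.norm_integral_le_of_norm_le_const
        (C := C / R ^ 2) (f := fun x : ℝ => F (↑x + ↑(-R:ℝ) * I)) (a := -R) (b := R) ?_
      · calc ‖∫ x : ℝ in (-R)..R, F (↑x + ↑(-R:ℝ) * I)‖ ≤ C / R ^ 2 * |R - (-R)| := this
          _ = C / R ^ 2 * (2 * R) := by rw [abs_of_pos (by linarith)]; ring_nf
      · intro x _
        have him : (↑x + ↑(-R:ℝ) * I).im = -R := by simp
        apply hbound _ (by rw [him]; linarith)
        calc R = |(↑x + ↑(-R:ℝ) * I).im| := by rw [him, abs_neg, abs_of_pos hRpos]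
          _ ≤ ‖_‖ := Complex.abs_im_le_norm _
    have hside : ∀ c : ℝ, |c| = R →
        ‖∫ y : ℝ in (-R)..(0:ℝ), F (↑c + ↑y * I)‖ ≤ C / R ^ 2 * R := by
      intro c hc
      have := intervalIntegral.norm_integral_le_of_norm_le_const
        (C := C / R ^ 2) (f := fun y : ℝ => F (↑c + ↑y * I)) (a := -R) (b := 0) ?_
      · calc ‖∫ y : ℝ in (-R)..(0:ℝ), F (↑c + ↑y * I)‖ ≤ C / R ^ 2 * |0 - (-R)| := this
          _ = C / R ^ 2 * R := by rw [sub_neg_eq_add, zero_add, abs_of_pos hRpos]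
      · intro y hy
        rw [Set.uIoc_of_le (by linarith : -R ≤ (0:ℝ))] at hy
        have him : (↑c + ↑y * I).im = y := by simp
        apply hbound _ (by rw [him]; exact hy.2)
        calc R = |(↑c + ↑y * I).re| := by simp [hc.symm]
          _ ≤ ‖_‖ := Complex.abs_re_le_norm _
    -- extract the real-line integral
    have heq : (∫ x : ℝ in (-R)..R, F ↑x) =
        (∫ x : ℝ in (-R)..R, F (↑x + ↑(-R:ℝ) * I)) +
          I • (∫ y : ℝ in (-R)..(0:ℝ), F (↑R + ↑y * I)) -
          I • (∫ y : ℝ in (-R)..(0:ℝ), F (↑(-R:ℝ) + ↑y * I)) := by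
      have h := hrect
      push_cast at h ⊢
      simp only [smul_eq_mul] at h ⊢
      linear_combination -h
    rw [heq]
    have h1 := hbot
    have h2 := hside R (abs_of_pos hRpos)
    have h3 := hside (-R) (by rw [abs_neg, abs_of_pos hRpos])
    push_cast at h1 h2 h3
    calc ‖(∫ x : ℝ in (-R)..R, F (↑x + ↑(-R:ℝ) * I)) +
          I • (∫ y : ℝ in (-R)..(0:ℝ), F (↑R + ↑y * I)) -
          I • (∫ y : ℝ in (-R)..(0:ℝ), F (↑(-R:ℝ) + ↑y * I))‖
        ≤ ‖(∫ x : ℝ in (-R)..R, F (↑x + ↑(-R:ℝ) * I)) +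
            I • (∫ y : ℝ in (-R)..(0:ℝ), F (↑R + ↑y * I))‖ +
            ‖I • (∫ y : ℝ in (-R)..(0:ℝ), F (↑(-R:ℝ) + ↑y * I))‖ := norm_sub_le _ _
      _ ≤ ‖(∫ x : ℝ in (-R)..R, F (↑x + ↑(-R:ℝ) * I))‖ +
            ‖I • (∫ y : ℝ in (-R)..(0:ℝ), F (↑R + ↑y * I))‖ +
            ‖I • (∫ y : ℝ in (-R)..(0:ℝ), F (↑(-R:ℝ) + ↑y * I))‖ := by
          gcongr; exact norm_add_le _ _
      _ ≤ C / R ^ 2 * (2 * R) + C / R ^ 2 * R + C / R ^ 2 * R := by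
          rw [norm_smul, norm_smul]
          simp only [Complex.norm_I, one_mul]
          push_cast
          gcongr <;> first | exact h1 | exact h2 | exact h3
      _ = 4 * C / R := by field_simp; ring
  have hint := Ff_real_integrable (s := s) (D := D) hlam ha
  have h1 : Filter.Tendsto (fun R : ℝ => ∫ t in (-R)..R, F ↑t) Filter.atTop
      (nhds (∫ t : ℝ, F ↑t)) :=
    intervalIntegral_tendsto_integral hint Filter.tendsto_neg_atTop_atBot Filter.tendsto_id
  have h2 : Filter.Tendsto (fun R : ℝ => ∫ t in (-R)..R, F ↑t) Filter.atTop (nhds 0) := by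
    apply squeeze_zero_norm' _ (Filter.Tendsto.const_div_atTop Filter.tendsto_id (4 * C))
    filter_upwards [Filter.eventually_ge_atTop R₀] with R hR
    exact key R hR
  exact tendsto_nhds_unique h1 h2


lemma Wf_real_continuous (hlam : 0 < lam) :
    Continuous fun t : ℝ => Wf lam s D ↑t :=
  continuous_iff_continuousAt.mpr fun t =>
    ((Wf_differentiableAt hlam (by simp : ((t:ℂ)).im ≤ 0)).continuousAt).comp
      Complex.continuous_ofReal.continuousAt

lemma Wsq_real_integrable (hlam : 0 < lam) :
    Integrable fun t : ℝ => ‖Wf lam s D ↑t‖ ^ 2 := by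
  have hM1 : (1:ℝ) ≤ 1 + lam := by linarith
  have hS := Sc_nonneg (s := s) (D := D)
  apply integrable_of_decay (E := ℝ) ?_ (3 * Sc s D ^ 2) (3 * (1 + lam)) (by linarith)
  · intro t ht
    have h1 : 3 * (1 + lam) ≤ ‖(t : ℂ)‖ := by rwa [Complex.norm_real, Real.norm_eq_abs]
    have hW := Wf_bound (s := s) (D := D) hlam hM1 (by linarith) h1
    have htpos : (0:ℝ) < |t| := by linarith
    have habs : ‖(t:ℂ)‖ = |t| := by rw [Complex.norm_real, Real.norm_eq_abs]
    rw [habs] at hW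
    have hWnn := norm_nonneg (Wf lam s D ((t:ℂ)))
    rw [Real.norm_eq_abs, _root_.abs_of_nonneg (sq_nonneg _)]
    calc ‖Wf lam s D ((t:ℂ))‖ ^ 2 ≤ ((3/2) * Sc s D / |t|) ^ 2 := by
          exact pow_le_pow_left₀ hWnn hW 2
      _ = (9/4) * Sc s D ^ 2 / t ^ 2 := by
          rw [div_pow, _root_.sq_abs]; ring_nf
      _ ≤ 3 * Sc s D ^ 2 / t ^ 2 := by
          apply div_le_div_of_nonneg_right _ (by positivity)
          nlinarith
  · exact ((continuous_norm.comp (Wf_real_continuous hlam)).pow 2)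

end Stmt13Aux

/-- With W(t) := Σ_{l=0}^s D_l/(iλ − t)^{l+1} and
Q(t) := (τ_n(t,a)/τ_n(t,ā)) Σ_{l=0}^s conj(D_l)/(−iλ − t)^{l+1},
one has ∫ |W + Q|² dt = 2 ∫ |W|² dt. -/
theorem stmt_13 (lam : ℝ) (hlam : 0 < lam) (n s : ℕ) (hn : 1 ≤ n) (hs : 1 ≤ s)
    (a : ℕ → ℂ) (ha : ∀ k < n, 0 < (a k).im) (D : ℕ → ℂ) :
    (∫ t : ℝ,
        ‖((∑ l ∈ Finset.range (s + 1), D l / (I * lam - t) ^ (l + 1)) +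
              tau n t a / tau n t (fun k => starRingEnd ℂ (a k)) *
                ∑ l ∈ Finset.range (s + 1), starRingEnd ℂ (D l) / (-(I * lam) - t) ^ (l + 1))‖ ^
          2) =
      2 * ∫ t : ℝ,
        ‖(∑ l ∈ Finset.range (s + 1), D l / (I * lam - t) ^ (l + 1))‖ ^ 2 := by
  have hM1 : 1 ≤ Stmt13Aux.Mb lam n a := Stmt13Aux.one_le_Mb hlam
  -- pointwise identity
  have hpt : ∀ t : ℝ,
      ‖(∑ l ∈ Finset.range (s + 1), D l / (I * lam - t) ^ (l + 1)) +
            tau n t a / tau n t (fun k => starRingEnd ℂ (a k)) *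
              ∑ l ∈ Finset.range (s + 1), starRingEnd ℂ (D l) / (-(I * lam) - t) ^ (l + 1)‖ ^ 2
        = 2 * ‖∑ l ∈ Finset.range (s + 1), D l / (I * lam - t) ^ (l + 1)‖ ^ 2
          + 2 * (Stmt13Aux.Ff lam n s a D ↑t).re := by
    intro t
    set w : ℂ := ∑ l ∈ Finset.range (s + 1), D l / (I * lam - t) ^ (l + 1) with hw
    set T : ℂ := tau n ↑t a with hT
    have hTne : T ≠ 0 := Stmt13Aux.tau_ne_zero ha (by simp : ((t:ℂ)).im ≤ 0)
    have hTcne : (starRingEnd ℂ) T ≠ 0 := by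
      simpa only [ne_eq, map_eq_zero] using hTne
    have hconjT : tau n ↑t (fun k => starRingEnd ℂ (a k)) = starRingEnd ℂ T := by
      rw [hT]
      unfold tau
      rw [map_prod]
      exact Finset.prod_congr rfl fun k _ => by
        rw [map_sub, Complex.conj_ofReal]
    have hV : (∑ l ∈ Finset.range (s + 1),
        starRingEnd ℂ (D l) / (-(I * lam) - t) ^ (l + 1)) = starRingEnd ℂ w := by
      rw [hw, map_sum]
      refine Finset.sum_congr rfl fun l _ => ?_
      rw [map_div₀, map_pow]
      congr 2
      rw [map_sub, map_mul, Complex.conj_ofReal, Complex.conj_ofReal, Complex.conj_I]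
      ring
    rw [hconjT, hV]
    have hFt : Stmt13Aux.Ff lam n s a D ↑t = starRingEnd ℂ T / T * w ^ 2 := by
      unfold Stmt13Aux.Ff Stmt13Aux.Wf
      rw [hconjT]
    set q : ℂ := T / starRingEnd ℂ T * starRingEnd ℂ w with hq
    have hconjq : starRingEnd ℂ q = starRingEnd ℂ T / T * w := by
      rw [hq, map_mul, map_div₀]
      simp
    have key : (w + q) * starRingEnd ℂ (w + q) =
        2 * (w * starRingEnd ℂ w) +
          (starRingEnd ℂ T / T * w ^ 2 + starRingEnd ℂ (starRingEnd ℂ T / T * w ^ 2)) := by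
      rw [map_add, hconjq, hq]
      rw [map_mul, map_div₀]
      simp only [Complex.conj_conj]
      field_simp
      rw [map_pow]; ring
    have hre := congrArg Complex.re key
    rw [Complex.mul_conj, Complex.mul_conj, Complex.add_conj] at hre
    rw [Complex.sq_norm, Complex.sq_norm]
    rw [hFt]
    simpa using hre
  simp only [hpt]
  have hA : Integrable fun t : ℝ =>
      ‖∑ l ∈ Finset.range (s + 1), D l / (I * lam - t) ^ (l + 1)‖ ^ 2 :=
    Stmt13Aux.Wsq_real_integrable hlam
  have hFint : Integrable fun t : ℝ => Stmt13Aux.Ff lam n s a D ↑t :=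
    Stmt13Aux.Ff_real_integrable hlam ha
  have hB : Integrable fun t : ℝ => (Stmt13Aux.Ff lam n s a D ↑t).re := by
    have := hFint.re
    simpa using this
  rw [integral_add (hA.const_mul 2) (hB.const_mul 2), integral_const_mul, integral_const_mul]
  have hzero : (∫ t : ℝ, (Stmt13Aux.Ff lam n s a D ↑t).re) = 0 := by
    have h1 : (∫ t : ℝ, (Stmt13Aux.Ff lam n s a D ↑t).re) =
        (∫ t : ℝ, Stmt13Aux.Ff lam n s a D ↑t).re := by
      have := integral_re hFint
      simpa using this
    rw [h1, Stmt13Aux.integral_Ff_eq_zero hlam ha]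
    simp
  rw [hzero]
  ring
end
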